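/- arXiv:1807.10017 — 3 statements merged into one kernel-verified Lean document; each statement's English description precedes it below -/
import Mathlib

section
/- Let A∈ℝ∖{0}, B∈ℝ. For every integer n≥1 and every x∈(−∞,1), the dispersion function satisfies the two identities: ζ_n(x)=[1+x((A+2B)/(A(n+1))−1)]·F(a_n,b_n;n+1;x)+((2x−1)/(n+1))·F(a_n,b_n;n+2;x)−(2x/((n+1)(n+2)))·F(a_n,b_n;n+3;x), and ζ_n(x)=((A+2B)/(A(n+1)))·x·F(a_n,b_n;n+1;x)+((n−(n+1)x)/(n+1))·F(a_n,b_n;n+2;x)+(2nx/((n+1)(n+2)))·F(a_n,b_n;n+3;x). -/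
open MeasureTheory Real Set
open intervalIntegral

/-- Rising factorial (Pochhammer symbol) `(a)_k`. -/
noncomputable def poch (a : ℝ) (k : ℕ) : ℝ := (ascPochhammer ℝ k).eval a

/-- Gauss hypergeometric function `F(a,b;c;x)`: given by Euler's integral representation
when `c > b > 0` (valid for all `x ∈ (-∞,1]`), and by the defining power series otherwise. -/
noncomputable def hyper (a b c x : ℝ) : ℝ :=
  if b < c ∧ 0 < b then
    Real.Gamma c / (Real.Gamma b * Real.Gamma (c - b)) *
      ∫ t in (0:ℝ)..1, t ^ (b - 1) * (1 - t) ^ (c - b - 1) * (1 - x * t) ^ (-a)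
  else
    ∑' k : ℕ, poch a k * poch b k / (poch c k * (Nat.factorial k)) * x ^ k

/-- The coefficient `a_t = (t - √(t²+8))/2`. -/
noncomputable def aCoef (t : ℝ) : ℝ := (t - Real.sqrt (t ^ 2 + 8)) / 2

/-- The coefficient `b_t = (t + √(t²+8))/2`. -/
noncomputable def bCoef (t : ℝ) : ℝ := (t + Real.sqrt (t ^ 2 + 8)) / 2

/-- `F_t(x) = F(a_t, b_t; t+1; x)`. -/
noncomputable def Fhyp (t x : ℝ) : ℝ := hyper (aCoef t) (bCoef t) (t + 1) x

/-- The dispersion function `ζ_n` associated with the quadratic profile `f₀(r) = Ar² + B`. -/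
noncomputable def zetaDisp (A B : ℝ) (n : ℕ) (x : ℝ) : ℝ :=
  Fhyp n x * (1 - x + (A + 2 * B) / (A * ((n : ℝ) + 1)) * x)
    + ∫ τ in (0:ℝ)..1, Fhyp n (τ * x) * τ ^ n * (-1 + 2 * x * τ)


noncomputable def II (p q r y : ℝ) : ℝ :=
  ∫ t in (0:ℝ)..1, t ^ p * (1 - t) ^ q * (1 - y * t) ^ r


lemma base_pos {y t : ℝ} (hy : y < 1) (ht0 : 0 ≤ t) (ht1 : t ≤ 1) : 0 < 1 - y * t := by
  rcases le_or_gt y 0 with h | h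
  · nlinarith
  · nlinarith

lemma cont_rpow {p : ℝ} (hp : 0 ≤ p) : Continuous fun t : ℝ => t ^ p := by
  rw [continuous_iff_continuousAt]
  exact fun t => Real.continuousAt_rpow_const t p (Or.inr hp)

lemma contOn_fac {y r : ℝ} (hy : y < 1) :
    ContinuousOn (fun t : ℝ => (1 - y * t) ^ r) (Icc 0 1) := by
  apply ContinuousOn.rpow_const
  · fun_prop
  · intro t ht
    exact Or.inl (base_pos hy ht.1 ht.2).ne'

lemma integrable_one_sub_rpow {q : ℝ} (hq : -1 < q) :
    IntervalIntegrable (fun t : ℝ => (1 - t) ^ q) volume 0 1 := by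
  have h := (intervalIntegrable_rpow' hq (a := 0) (b := 1)).comp_sub_left 1
  norm_num at h; exact h.symm

lemma II_integrable {p q r y : ℝ} (hp : 0 ≤ p) (hq : -1 < q) (hy : y < 1) :
    IntervalIntegrable (fun t : ℝ => t ^ p * (1 - t) ^ q * (1 - y * t) ^ r) volume 0 1 := by
  have h1 : IntervalIntegrable (fun t : ℝ => (1 - t) ^ q) volume 0 1 :=
    integrable_one_sub_rpow hq
  have h2 : ContinuousOn (fun t : ℝ => t ^ p * (1 - y * t) ^ r) (uIcc 0 1) := by
    rw [uIcc_of_le (by norm_num : (0:ℝ) ≤ 1)]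
    exact ((cont_rpow hp).continuousOn).mul (contOn_fac hy)
  have := h1.continuousOn_mul h2
  apply this.congr
  intro t _
  beta_reduce
  ring

lemma rpow_succ₀ {t : ℝ} (p : ℝ) (hp : p + 1 ≠ 0) : t ^ (p+1) = t ^ p * t := by
  rcases eq_or_ne t 0 with rfl | ht
  · rw [Real.zero_rpow hp]; ring
  · exact Real.rpow_add_one ht p

lemma II_split_t {p q r y : ℝ} (hp : 0 ≤ p) (hq : -1 < q) (hy : y < 1) :
    II (p+1) q r y = II p q r y - II p (q+1) r y := by
  rw [eq_sub_iff_add_eq]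
  simp only [II]
  rw [← intervalIntegral.integral_add
    (II_integrable (by linarith) hq hy) (II_integrable hp (by linarith) hy)]
  apply intervalIntegral.integral_congr
  intro t ht
  rw [uIcc_of_le (by norm_num : (0:ℝ) ≤ 1)] at ht
  have h1 : t ^ (p+1) = t ^ p * t := rpow_succ₀ p (by linarith)
  have h2 : (1-t) ^ (q+1) = (1-t) ^ q * (1-t) := rpow_succ₀ q (by linarith)
  beta_reduce
  rw [h1, h2]; ring

lemma II_split_r {p q r y : ℝ} (hp : 0 ≤ p) (hq : -1 < q) (hy : y < 1) :
    II p q (r+1) y = II p q r y - y * II (p+1) q r y := by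
  rw [eq_sub_iff_add_eq]
  simp only [II]
  rw [← intervalIntegral.integral_const_mul, ← intervalIntegral.integral_add
    (II_integrable hp hq hy) ((II_integrable (by linarith) hq hy).const_mul y)]
  apply intervalIntegral.integral_congr
  intro t ht
  rw [uIcc_of_le (by norm_num : (0:ℝ) ≤ 1)] at ht
  have h1 : t ^ (p+1) = t ^ p * t := rpow_succ₀ p (by linarith)
  have h2 : (1-y*t) ^ (r+1) = (1-y*t) ^ r * (1-y*t) :=
    Real.rpow_add_one (base_pos hy ht.1 ht.2).ne' r
  beta_reduce
  rw [h1, h2]; ring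

lemma II_ibp {p q r y : ℝ} (hp : 1 ≤ p) (hq : 0 < q) (hy : y < 1) :
    p * II (p-1) q r y = q * II p (q-1) r y + y * r * II p q (r-1) y := by
  set f : ℝ → ℝ := fun t => t ^ p * (1 - t) ^ q * (1 - y * t) ^ r with hf
  set f' : ℝ → ℝ := fun t => p * (t ^ (p-1) * (1 - t) ^ q * (1 - y * t) ^ r)
      - q * (t ^ p * (1 - t) ^ (q-1) * (1 - y * t) ^ r)
      - (y * r) * (t ^ p * (1 - t) ^ q * (1 - y * t) ^ (r-1)) with hf'
  have hderiv : ∀ t ∈ Ioo (0:ℝ) 1, HasDerivAt f (f' t) t := by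
    intro t ht
    have h1 : HasDerivAt (fun t : ℝ => t ^ p) (p * t ^ (p-1)) t := by
      simpa [mul_comm] using Real.hasDerivAt_rpow_const (x := t) (p := p) (Or.inl ht.1.ne')
    have h2 : HasDerivAt (fun t : ℝ => (1 - t) ^ q) (-(q * (1 - t) ^ (q-1))) t := by
      have inner : HasDerivAt (fun t : ℝ => 1 - t) (-1) t := (hasDerivAt_id t).const_sub 1
      have outer : HasDerivAt (fun u : ℝ => u ^ q) (q * (1 - t) ^ (q-1)) (1 - t) := by
        simpa [mul_comm] using Real.hasDerivAt_rpow_const (x := 1 - t) (p := q)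
          (Or.inl (by linarith [ht.2] : (1:ℝ) - t ≠ 0))
      exact (outer.comp t inner).congr_deriv (by ring)
    have h3 : HasDerivAt (fun t : ℝ => (1 - y * t) ^ r) (-(y * (r * (1 - y * t) ^ (r-1)))) t := by
      have inner : HasDerivAt (fun t : ℝ => 1 - y * t) (-y) t := by
        simpa using ((hasDerivAt_id t).const_mul y).const_sub 1
      have outer : HasDerivAt (fun u : ℝ => u ^ r) (r * (1 - y * t) ^ (r-1)) (1 - y * t) := by
        simpa [mul_comm] using Real.hasDerivAt_rpow_const (x := 1 - y * t) (p := r)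
          (Or.inl (base_pos hy ht.1.le ht.2.le).ne')
      have := outer.comp t inner
      exact this.congr_deriv (by ring)
    have := (h1.mul h2).mul h3
    refine this.congr_deriv (Eq.symm ?_)
    simp only [hf', Pi.mul_apply]
    ring
  have hcont : ContinuousOn f (Icc 0 1) := by
    apply ContinuousOn.mul
    · apply ContinuousOn.mul (cont_rpow (by linarith)).continuousOn
      exact ((cont_rpow hq.le).comp (continuous_const.sub continuous_id)).continuousOn
    · exact contOn_fac hy
  have hint : IntervalIntegrable f' volume 0 1 := by
    apply IntervalIntegrable.sub
    apply IntervalIntegrable.sub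
    · exact (II_integrable (by linarith) (by linarith) hy).const_mul p
    · exact (II_integrable (by linarith) (by linarith) hy).const_mul q
    · exact (II_integrable (by linarith) (by linarith) hy).const_mul (y*r)
  have key : ∫ t in (0:ℝ)..1, f' t = f 1 - f 0 := by
    apply integral_eq_sub_of_hasDeriv_right_of_le (by norm_num) hcont
      (fun t ht => (hderiv t ht).hasDerivWithinAt) hint
  have hf1 : f 1 = 0 := by
    simp only [hf]
    rw [show (1:ℝ) - 1 = 0 by ring, Real.zero_rpow hq.ne']
    ring
  have hf0 : f 0 = 0 := by
    simp only [hf]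
    rw [Real.zero_rpow (by linarith : p ≠ 0)]
    ring
  have hsplit : ∫ t in (0:ℝ)..1, f' t =
      p * II (p-1) q r y - q * II p (q-1) r y - (y*r) * II p q (r-1) y := by
    simp only [hf']
    rw [intervalIntegral.integral_sub, intervalIntegral.integral_sub,
      intervalIntegral.integral_const_mul, intervalIntegral.integral_const_mul,
      intervalIntegral.integral_const_mul]
    · rfl
    · exact (II_integrable (by linarith) (by linarith) hy).const_mul p
    · exact (II_integrable (by linarith) (by linarith) hy).const_mul q
    · exact ((II_integrable (by linarith) (by linarith) hy).const_mul p).sub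
        ((II_integrable (by linarith) (by linarith) hy).const_mul q)
    · exact (II_integrable (by linarith) (by linarith) hy).const_mul (y*r)
  rw [key, hf1, hf0] at hsplit
  linarith [hsplit]

lemma II_meas {p q r z : ℝ} (hz : z < 1) :
    AEStronglyMeasurable (fun t : ℝ => t ^ p * (1 - t) ^ q * (1 - z * t) ^ r)
      (volume.restrict (uIoc (0:ℝ) 1)) := by
  rw [uIoc_of_le (by norm_num : (0:ℝ) ≤ 1),
    ← MeasureTheory.Measure.restrict_congr_set MeasureTheory.Ioo_ae_eq_Ioc]
  apply ContinuousOn.aestronglyMeasurable _ measurableSet_Ioo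
  apply ContinuousOn.mul
  apply ContinuousOn.mul
  · exact ContinuousOn.rpow_const continuousOn_id (fun t ht => Or.inl ht.1.ne')
  · refine ContinuousOn.rpow_const (by fun_prop) (fun t ht => Or.inl ?_)
    have : (1:ℝ) - t ≠ 0 := by linarith [ht.2]
    simpa using this
  · refine ContinuousOn.rpow_const (by fun_prop) (fun t ht => Or.inl ?_)
    have := base_pos hz ht.1.le ht.2.le
    intro hcon
    simp only [hcon] at this
    exact absurd this (lt_irrefl 0)

lemma II_hasDerivAt {p q r y : ℝ} (hp : 0 ≤ p) (hq : -1 < q) (hy : y < 1) :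
    HasDerivAt (fun z => II p q r z) (-(r * II (p+1) q (r-1) y)) y := by
  set ε : ℝ := min 1 ((1 - y)/2) with hε
  have hεpos : 0 < ε := lt_min one_pos (by linarith)
  set m : ℝ := min 1 ((1 - y)/2) with hm
  set M : ℝ := 2 + |y| with hM
  have hmpos : 0 < m := hεpos
  have hMpos : 0 < M := by positivity
  set C : ℝ := Real.exp (|r - 1| * (|Real.log m| + |Real.log M|)) with hC
  have hball : ∀ z ∈ Metric.ball y ε, ∀ t ∈ Set.Ioc (0:ℝ) 1,
      z < 1 ∧ m ≤ 1 - z * t ∧ 1 - z * t ≤ M := by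
    intro z hz t ht
    rw [Metric.mem_ball, Real.dist_eq, abs_lt] at hz
    have hε2 : ε ≤ (1 - y)/2 := min_le_right _ _
    have hε1 : ε ≤ 1 := min_le_left _ _
    have hz1 : z < 1 := by linarith [hz.2]
    refine ⟨hz1, ?_, ?_⟩
    · rcases le_or_gt z 0 with h | h
      · have : 1 - z * t ≥ 1 := by nlinarith [ht.1.le, ht.2]
        have : m ≤ 1 := min_le_left _ _
        linarith
      · have h1 : 1 - z * t ≥ 1 - z := by nlinarith [ht.2]
        have h2 : 1 - z ≥ (1 - y)/2 := by linarith [hz.2]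
        have : m ≤ (1 - y)/2 := min_le_right _ _
        linarith
    · have hza : |z| ≤ |y| + 1 := by
        rw [abs_le]
        constructor
        · have := neg_abs_le y; linarith [hz.1]
        · have := le_abs_self y; linarith [hz.2]
      have h2 := abs_le.mp hza
      have h1 : z * t ≥ -(|y| + 1) := by nlinarith [ht.1.le, ht.2]
      simp only [hM]; linarith
  have hCbound : ∀ z ∈ Metric.ball y ε, ∀ t ∈ Set.Ioc (0:ℝ) 1,
      (1 - z * t) ^ (r - 1) ≤ C := by
    intro z hz t ht
    obtain ⟨hz1, hlo, hhi⟩ := hball z hz t ht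
    have hpos : 0 < 1 - z * t := lt_of_lt_of_le hmpos hlo
    rw [Real.rpow_def_of_pos hpos, hC]
    apply Real.exp_le_exp.mpr
    have hlog : |Real.log (1 - z * t)| ≤ |Real.log m| + |Real.log M| := by
      have h1 : Real.log m ≤ Real.log (1 - z * t) := Real.log_le_log hmpos hlo
      have h2 : Real.log (1 - z * t) ≤ Real.log M := Real.log_le_log hpos hhi
      rw [abs_le]
      constructor
      · have := neg_abs_le (Real.log m); linarith [abs_nonneg (Real.log M)]
      · have := le_abs_self (Real.log M); linarith [abs_nonneg (Real.log m)]
    calc Real.log (1 - z * t) * (r - 1) ≤ |Real.log (1 - z * t) * (r - 1)| := le_abs_self _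
      _ = |r - 1| * |Real.log (1 - z * t)| := by rw [abs_mul]; ring
      _ ≤ |r - 1| * (|Real.log m| + |Real.log M|) := by
          apply mul_le_mul_of_nonneg_left hlog (abs_nonneg _)
  have main := intervalIntegral.hasDerivAt_integral_of_dominated_loc_of_deriv_le
    (F := fun z t => t ^ p * (1 - t) ^ q * (1 - z * t) ^ r)
    (F' := fun z t => -r * (t ^ (p+1) * (1 - t) ^ q * (1 - z * t) ^ (r-1)))
    (x₀ := y) (a := 0) (b := 1) (bound := fun t => |r| * C * (1 - t) ^ q)
    (Metric.ball_mem_nhds y hεpos)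
    (by
      apply Filter.eventually_of_mem (Metric.ball_mem_nhds y hεpos)
      intro z hz
      rw [Metric.mem_ball, Real.dist_eq, abs_lt] at hz
      have : z < 1 := by
        have hε2 : ε ≤ (1 - y)/2 := min_le_right _ _
        linarith [hz.2]
      exact II_meas this)
    (II_integrable hp hq hy)
    ((II_meas (p := p+1) (q := q) (r := r-1) hy).const_mul (-r))
    (by
      apply Filter.Eventually.of_forall
      intro t ht z hz
      rw [uIoc_of_le (by norm_num : (0:ℝ) ≤ 1)] at ht
      obtain ⟨hz1, hlo, hhi⟩ := hball z hz t ht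
      have ht0 : 0 < t := ht.1
      have ht1 : t ≤ 1 := ht.2
      have h1t : 0 ≤ 1 - t := by linarith
      beta_reduce
      rw [Real.norm_eq_abs, abs_mul, abs_mul, abs_mul]
      have e1 : |t ^ (p+1)| ≤ 1 := by
        rw [abs_of_nonneg (Real.rpow_nonneg ht0.le _)]
        exact Real.rpow_le_one ht0.le ht1 (by linarith)
      have e2 : |(1 - t) ^ q| = (1 - t) ^ q := abs_of_nonneg (Real.rpow_nonneg h1t _)
      have e3 : |(1 - z*t) ^ (r-1)| ≤ C := by
        rw [abs_of_nonneg (Real.rpow_nonneg (by linarith [lt_of_lt_of_le hmpos hlo]) _)]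
        exact hCbound z hz t ht
      calc |(-r)| * (|t ^ (p+1)| * |(1-t)^q| * |(1-z*t)^(r-1)|)
          ≤ |r| * (1 * (1-t)^q * C) := by
            rw [abs_neg]
            apply mul_le_mul_of_nonneg_left _ (abs_nonneg r)
            have hab : |t^(p+1)| * |(1-t)^q| ≤ 1 * (1-t)^q := by
              rw [e2]
              exact mul_le_mul_of_nonneg_right e1 (Real.rpow_nonneg h1t _)
            exact mul_le_mul hab e3 (abs_nonneg _) (by positivity)
        _ = |r| * C * (1-t)^q := by ring)
    (((integrable_one_sub_rpow hq).const_mul (|r| * C)))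
    (by
      apply Filter.Eventually.of_forall
      intro t ht z hz
      rw [uIoc_of_le (by norm_num : (0:ℝ) ≤ 1)] at ht
      obtain ⟨hz1, hlo, hhi⟩ := hball z hz t ht
      have hpos : 0 < 1 - z * t := lt_of_lt_of_le hmpos hlo
      have inner : HasDerivAt (fun z : ℝ => 1 - z * t) (-t) z := by
        simpa using ((hasDerivAt_id z).mul_const t).const_sub 1
      have outer : HasDerivAt (fun u : ℝ => u ^ r) (r * (1 - z*t) ^ (r-1)) (1 - z*t) := by
        simpa [mul_comm] using Real.hasDerivAt_rpow_const (x := 1 - z*t) (p := r)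
          (Or.inl hpos.ne')
      have := ((outer.comp z inner).const_mul (t ^ p * (1 - t) ^ q))
      refine this.congr_deriv (Eq.symm ?_)
      beta_reduce
      rw [rpow_succ₀ p (by linarith)]
      ring)
  have h2 := main.2
  simp only [II]
  refine h2.congr_deriv (Eq.symm ?_)
  rw [← intervalIntegral.integral_const_mul, ← intervalIntegral.integral_neg]
  apply intervalIntegral.integral_congr
  intro t _
  beta_reduce
  ring

lemma tau_x_lt {x τ : ℝ} (hx : x < 1) (h0 : 0 ≤ τ) (h1 : τ ≤ 1) : τ * x < 1 := by
  rcases le_or_gt x 0 with h | h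
  · nlinarith
  · nlinarith

lemma II_contOn {p q r x : ℝ} (hp : 0 ≤ p) (hq : -1 < q) (hx : x < 1) :
    ContinuousOn (fun τ : ℝ => II p q r (τ * x)) (Icc 0 1) := by
  intro τ hτ
  apply ContinuousAt.continuousWithinAt
  have hin : ContinuousAt (fun τ : ℝ => τ * x) τ := by fun_prop
  exact ContinuousAt.comp (f := fun τ : ℝ => τ * x) (x := τ)
    ((II_hasDerivAt hp hq (tau_x_lt hx hτ.1 hτ.2)).continuousAt) hin

lemma LDgen {b x : ℝ} (hb : 1 ≤ b) (hx : x < 1) (k : ℕ) (e r : ℝ) (he : 0 < e)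
    (hke : (k:ℝ) = b + e) {τ₀ : ℝ} (hτx : τ₀ * x < 1) :
    HasDerivAt (fun τ : ℝ => τ ^ k * II (b-1) e r (τ * x))
      (e * (τ₀ ^ (k-1) * II (b-1) (e-1) r (τ₀ * x))) τ₀ := by
  have hk : 1 ≤ k := by
    by_contra h
    push_neg at h
    interval_cases k
    simp at hke; linarith
  have h1 : HasDerivAt (fun τ : ℝ => τ ^ k) ((k:ℝ) * τ₀ ^ (k-1)) τ₀ := hasDerivAt_pow k τ₀
  have h2 : HasDerivAt (fun τ : ℝ => II (b-1) e r (τ * x))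
      (-(r * II b e (r-1) (τ₀ * x)) * x) τ₀ := by
    have inner : HasDerivAt (fun τ : ℝ => τ * x) x τ₀ := hasDerivAt_mul_const x
    have outer := II_hasDerivAt (p := b-1) (q := e) (r := r) (y := τ₀ * x)
      (by linarith) (by linarith) hτx
    have := outer.comp τ₀ inner
    refine this.congr_deriv (Eq.symm ?_)
    rw [show b - 1 + 1 = b by ring]
  have prod := h1.mul h2
  have ibp := II_ibp (p := b) (q := e) (r := r) (y := τ₀ * x) hb he hτx
  have spl := II_split_t (p := b - 1) (q := e - 1) (r := r) (y := τ₀ * x)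
    (by linarith) (by linarith) hτx
  rw [show b - 1 + 1 = b by ring, show e - 1 + 1 = e by ring] at spl
  refine prod.congr_deriv (Eq.symm ?_)
  have hτk : τ₀ ^ k = τ₀ ^ (k-1) * τ₀ := by
    conv_lhs => rw [show k = (k-1) + 1 by omega]
    rw [pow_succ]
  rw [hτk]
  have expand : τ₀ ^ (k - 1) * τ₀ * (-(r * II b e (r - 1) (τ₀ * x)) * x)
      = τ₀ ^ (k-1) * (-((τ₀ * x) * r * II b e (r-1) (τ₀ * x))) := by ring
  rw [expand, show (τ₀ * x) * r * II b e (r-1) (τ₀*x) = b * II (b-1) e r (τ₀*x)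
    - e * II b (e-1) r (τ₀*x) by linarith [ibp], spl]
  linear_combination -τ₀ ^ (k-1) * II (b-1) e r (τ₀ * x) * hke

lemma FTC_A {b x : ℝ} (hb : 1 ≤ b) (hx : x < 1) (k : ℕ) (e r : ℝ) (he : 0 < e)
    (hke : (k:ℝ) = b + e) :
    ∫ τ in (0:ℝ)..1, τ ^ (k-1) * II (b-1) (e-1) r (τ * x) = II (b-1) e r x / e := by
  have hk : 1 ≤ k := by
    by_contra h
    push_neg at h
    interval_cases k
    simp at hke; linarith
  have hderiv : ∀ τ ∈ uIcc (0:ℝ) 1,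
      HasDerivAt (fun τ : ℝ => τ ^ k * II (b-1) e r (τ * x))
        (e * (τ ^ (k-1) * II (b-1) (e-1) r (τ * x))) τ := by
    intro τ hτ
    rw [uIcc_of_le (by norm_num : (0:ℝ) ≤ 1)] at hτ
    exact LDgen hb hx k e r he hke (tau_x_lt hx hτ.1 hτ.2)
  have hint : IntervalIntegrable
      (fun τ : ℝ => τ ^ (k-1) * II (b-1) (e-1) r (τ * x)) volume 0 1 := by
    apply ContinuousOn.intervalIntegrable
    rw [uIcc_of_le (by norm_num : (0:ℝ) ≤ 1)]
    apply ContinuousOn.mul (continuousOn_pow (k-1))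
    exact II_contOn (by linarith) (by linarith) hx
  have hint' := hint.const_mul e
  have key := intervalIntegral.integral_eq_sub_of_hasDerivAt hderiv hint'
  have h0 : (0:ℝ) ^ k * II (b-1) e r (0 * x) = 0 := by
    rw [zero_pow (by omega)]; ring
  rw [h0, show (1:ℝ) * x = x by ring, one_pow] at key
  rw [intervalIntegral.integral_const_mul] at key
  rw [eq_div_iff he.ne']
  linear_combination key

/-- The key evaluation of the dispersion integral in terms of `II` at `x`. -/
lemma main_integral {a b x : ℝ} (ha : -1 < a) (ha0 : a < 0) (hb : 1 ≤ b) (hx : x < 1)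
    (n : ℕ) (hab1 : ((n:ℝ) + 1) = b + (a + 1)) :
    (a+1) * ∫ τ in (0:ℝ)..1, II (b-1) a (-a) (τ * x) * τ ^ n * (-1 + 2 * x * τ)
      = (2*x - 1) * II (b-1) (a+1) (-a) x - 2*x / (a+2) * II (b-1) (a+2) (-a) x := by
  have ha1 : (0:ℝ) < a + 1 := by linarith
  have ha2 : (0:ℝ) < a + 2 := by linarith
  -- ψ₁ τ = τ^(n+1) * II (b-1) (a+1) (-a) (τ x), derivative (a+1) τ^n II (b-1) a (-a) (τ x)
  have hψderiv : ∀ τ ∈ uIcc (0:ℝ) 1,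
      HasDerivAt (fun τ : ℝ => τ ^ (n+1) * II (b-1) (a+1) (-a) (τ * x))
        ((a+1) * (τ ^ n * II (b-1) a (-a) (τ * x))) τ := by
    intro τ hτ
    rw [uIcc_of_le (by norm_num : (0:ℝ) ≤ 1)] at hτ
    have := LDgen hb hx (n+1) (a+1) (-a) ha1 (by push_cast; linarith [hab1])
      (tau_x_lt hx hτ.1 hτ.2)
    rw [show a + 1 - 1 = a by ring] at this
    simpa using this
  -- Φ τ = (2xτ - 1) * ψ₁ τ
  have hΦderiv : ∀ τ ∈ uIcc (0:ℝ) 1,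
      HasDerivAt (fun τ : ℝ => (2*x*τ - 1) * (τ ^ (n+1) * II (b-1) (a+1) (-a) (τ * x)))
        (2*x * (τ ^ (n+1) * II (b-1) (a+1) (-a) (τ * x))
          + (2*x*τ - 1) * ((a+1) * (τ ^ n * II (b-1) a (-a) (τ * x)))) τ := by
    intro τ hτ
    have hlin : HasDerivAt (fun τ : ℝ => 2*x*τ - 1) (2*x) τ := by
      simpa using ((hasDerivAt_id τ).const_mul (2*x)).sub_const 1
    exact hlin.mul (hψderiv τ hτ)
  have hcont0 : ContinuousOn (fun τ : ℝ => τ ^ n * II (b-1) a (-a) (τ * x)) (Icc 0 1) :=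
    (continuousOn_pow n).mul (II_contOn (by linarith) ha hx)
  have hcont1 : ContinuousOn (fun τ : ℝ => τ ^ (n+1) * II (b-1) (a+1) (-a) (τ * x)) (Icc 0 1) :=
    (continuousOn_pow (n+1)).mul (II_contOn (by linarith) (by linarith) hx)
  have hint1 : IntervalIntegrable
      (fun τ : ℝ => τ ^ (n+1) * II (b-1) (a+1) (-a) (τ * x)) volume 0 1 := by
    apply ContinuousOn.intervalIntegrable
    rw [uIcc_of_le (by norm_num : (0:ℝ) ≤ 1)]; exact hcont1
  have hint2 : IntervalIntegrable
      (fun τ : ℝ => (2*x*τ - 1) * ((a+1) * (τ ^ n * II (b-1) a (-a) (τ * x)))) volume 0 1 := by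
    apply ContinuousOn.intervalIntegrable
    rw [uIcc_of_le (by norm_num : (0:ℝ) ≤ 1)]
    exact (ContinuousOn.mul (by fun_prop) (hcont0.const_smul (a+1)))
  have key := intervalIntegral.integral_eq_sub_of_hasDerivAt hΦderiv
    (((hint1.const_mul (2*x))).add hint2)
  rw [intervalIntegral.integral_add (hint1.const_mul (2*x)) hint2,
    intervalIntegral.integral_const_mul] at key
  have hψint : ∫ τ in (0:ℝ)..1, τ ^ (n+1) * II (b-1) (a+1) (-a) (τ * x)
      = II (b-1) (a+2) (-a) x / (a+2) := by
    have := FTC_A hb hx (n+2) (a+2) (-a) ha2 (by push_cast; linarith [hab1])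
    rw [show a + 2 - 1 = a + 1 by ring, show n + 2 - 1 = n + 1 by omega] at this
    exact this
  have hΦ1 : (2*x*1 - 1) * ((1:ℝ) ^ (n+1) * II (b-1) (a+1) (-a) (1 * x))
      - (2*x*0 - 1) * ((0:ℝ) ^ (n+1) * II (b-1) (a+1) (-a) (0 * x))
      = (2*x - 1) * II (b-1) (a+1) (-a) x := by
    rw [zero_pow (by omega), one_pow, one_mul]
    ring
  rw [hΦ1, hψint] at key
  have hcongr : ∫ τ in (0:ℝ)..1, II (b-1) a (-a) (τ * x) * τ ^ n * (-1 + 2 * x * τ)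
      = ∫ τ in (0:ℝ)..1, (2*x*τ - 1) * ((τ ^ n * II (b-1) a (-a) (τ * x))) := by
    apply intervalIntegral.integral_congr
    intro τ _
    beta_reduce
    ring
  rw [hcongr]
  have hpull : ∫ τ in (0:ℝ)..1, (2*x*τ - 1) * ((a+1) * (τ ^ n * II (b-1) a (-a) (τ * x)))
      = (a+1) * ∫ τ in (0:ℝ)..1, (2*x*τ - 1) * (τ ^ n * II (b-1) a (-a) (τ * x)) := by
    rw [← intervalIntegral.integral_const_mul]
    apply intervalIntegral.integral_congr
    intro τ _
    beta_reduce
    ring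
  rw [hpull] at key
  have ha2' : a + 2 ≠ 0 := by linarith
  linear_combination key

/-- Contiguous relation used for the second identity, at `y = x`. -/
lemma bridge_II {a b x : ℝ} (ha : -1 < a) (ha0 : a < 0) (hb : 1 ≤ b) (hx : x < 1) :
    (a+1) * (1-x) * II (b-1) a (-a) x
      = (b*(1-x) + (a+1)*(1-2*x) - x*(1-a)) * II (b-1) (a+1) (-a) x
        + x*(b+2) * II (b-1) (a+2) (-a) x := by
  have ha1 : (0:ℝ) < a + 1 := by linarith
  have E1 := II_ibp (p := b) (q := a+1) (r := 1-a) (y := x) hb ha1 hx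
  rw [show (1:ℝ) - a - 1 = -a by ring, show a + 1 - 1 = a by ring] at E1
  have s1 := II_split_r (p := b-1) (q := a+1) (r := -a) (y := x) (by linarith) (by linarith) hx
  rw [show b - 1 + 1 = b by ring] at s1
  have s2 := II_split_t (p := b-1) (q := a+1) (r := -a) (y := x) (by linarith) (by linarith) hx
  rw [show b - 1 + 1 = b by ring, show a + 1 + 1 = a + 2 by ring] at s2
  have s3 := II_split_r (p := b) (q := a) (r := -a) (y := x) (by linarith) ha hx
  have s4 := II_split_t (p := b-1) (q := a) (r := -a) (y := x) (by linarith) ha hx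
  rw [show b - 1 + 1 = b by ring] at s4
  have s5 := II_split_t (p := b) (q := a) (r := -a) (y := x) (by linarith) ha hx
  rw [show (1:ℝ) - a = -a + 1 by ring] at E1
  rw [s1, s3] at E1
  rw [s2, s4, s5, s2, s4] at E1
  linear_combination -E1

lemma hyper_euler {a b c x : ℝ} (h1 : b < c) (h2 : 0 < b) :
    hyper a b c x = Real.Gamma c / (Real.Gamma b * Real.Gamma (c - b)) *
      II (b-1) (c-b-1) (-a) x := by
  rw [hyper, if_pos ⟨h1, h2⟩]
  rfl

lemma coef_add (t : ℝ) : aCoef t + bCoef t = t := by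
  rw [aCoef, bCoef]; ring

lemma coef_mul (t : ℝ) : aCoef t * bCoef t = -2 := by
  rw [aCoef, bCoef]
  have h : Real.sqrt (t^2+8) ^ 2 = t^2 + 8 := Real.sq_sqrt (by positivity)
  nlinarith [h]

lemma coef_facts {n : ℕ} (hn : 2 ≤ n) :
    -1 < aCoef n ∧ aCoef n < 0 ∧ (n:ℝ) < bCoef n ∧ bCoef n < (n:ℝ) + 1 := by
  have hn2 : (2:ℝ) ≤ (n:ℝ) := by exact_mod_cast hn
  have h1 : (n:ℝ) < Real.sqrt ((n:ℝ)^2+8) :=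
    (Real.lt_sqrt (by positivity)).mpr (by nlinarith)
  have h2 : Real.sqrt ((n:ℝ)^2+8) < (n:ℝ) + 2 :=
    (Real.sqrt_lt' (by positivity)).mpr (by nlinarith)
  simp only [aCoef, bCoef]
  refine ⟨by linarith, by linarith, by linarith, by linarith⟩

lemma id1_int {n : ℕ} (hn : 2 ≤ n) {x : ℝ} (hx : x < 1) :
    ∫ τ in (0:ℝ)..1, hyper (aCoef n) (bCoef n) ((n:ℝ)+1) (τ*x) * τ^n * (-1+2*x*τ)
      = (2*x-1)/((n:ℝ)+1) * hyper (aCoef n) (bCoef n) ((n:ℝ)+2) x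
        - 2*x/(((n:ℝ)+1)*((n:ℝ)+2)) * hyper (aCoef n) (bCoef n) ((n:ℝ)+3) x := by
  obtain ⟨ha, ha0, hbl, hbu⟩ := coef_facts hn
  set a := aCoef (n:ℝ) with hadef
  set b := bCoef (n:ℝ) with hbdef
  have hab : a + b = (n:ℝ) := coef_add _
  have hn2 : (2:ℝ) ≤ (n:ℝ) := by exact_mod_cast hn
  have hb1 : 1 ≤ b := by linarith
  have hb0 : 0 < b := by linarith
  have ha1 : (0:ℝ) < a + 1 := by linarith
  have ha2 : (0:ℝ) < a + 2 := by linarith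
  have hΓb : Real.Gamma b ≠ 0 := (Real.Gamma_pos_of_pos hb0).ne'
  have hΓa1 : Real.Gamma (a+1) ≠ 0 := (Real.Gamma_pos_of_pos ha1).ne'
  have hΓn1 : Real.Gamma ((n:ℝ)+1) ≠ 0 := (Real.Gamma_pos_of_pos (by linarith)).ne'
  have hΓa2 : Real.Gamma (a+2) = (a+1) * Real.Gamma (a+1) := by
    rw [show a+2 = (a+1)+1 by ring, Real.Gamma_add_one ha1.ne']
  have hΓa3 : Real.Gamma (a+3) = (a+2) * ((a+1) * Real.Gamma (a+1)) := by
    rw [show a+3 = (a+2)+1 by ring, Real.Gamma_add_one ha2.ne', hΓa2]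
  have hΓn2 : Real.Gamma ((n:ℝ)+2) = ((n:ℝ)+1) * Real.Gamma ((n:ℝ)+1) := by
    rw [show (n:ℝ)+2 = ((n:ℝ)+1)+1 by ring, Real.Gamma_add_one (by linarith)]
  have hΓn3 : Real.Gamma ((n:ℝ)+3) = ((n:ℝ)+2) * (((n:ℝ)+1) * Real.Gamma ((n:ℝ)+1)) := by
    rw [show (n:ℝ)+3 = ((n:ℝ)+2)+1 by ring, Real.Gamma_add_one (by linarith), hΓn2]
  have hE1 : ∀ y : ℝ, hyper a b ((n:ℝ)+1) y
      = Real.Gamma ((n:ℝ)+1) / (Real.Gamma b * Real.Gamma (a+1)) * II (b-1) a (-a) y := by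
    intro y
    rw [hyper_euler hbu hb0, show (n:ℝ)+1-b = a+1 by linarith, show a+1-1 = a by ring]
  have hE2 : hyper a b ((n:ℝ)+2) x
      = Real.Gamma ((n:ℝ)+2) / (Real.Gamma b * Real.Gamma (a+2)) * II (b-1) (a+1) (-a) x := by
    rw [hyper_euler (by linarith) hb0, show (n:ℝ)+2-b = a+2 by linarith,
      show a+2-1 = a+1 by ring]
  have hE3 : hyper a b ((n:ℝ)+3) x
      = Real.Gamma ((n:ℝ)+3) / (Real.Gamma b * Real.Gamma (a+3)) * II (b-1) (a+2) (-a) x := by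
    rw [hyper_euler (by linarith) hb0, show (n:ℝ)+3-b = a+3 by linarith,
      show a+3-1 = a+2 by ring]
  have hmain := main_integral ha ha0 hb1 hx n (by linarith)
  have hLHS : ∫ τ in (0:ℝ)..1, hyper a b ((n:ℝ)+1) (τ*x) * τ^n * (-1+2*x*τ)
      = Real.Gamma ((n:ℝ)+1) / (Real.Gamma b * Real.Gamma (a+1))
        * ∫ τ in (0:ℝ)..1, II (b-1) a (-a) (τ*x) * τ^n * (-1+2*x*τ) := by
    rw [← intervalIntegral.integral_const_mul]
    apply intervalIntegral.integral_congr
    intro τ _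
    beta_reduce
    rw [hE1 (τ*x)]
    ring
  rw [hLHS, hE2, hE3, hΓa2, hΓa3, hΓn2, hΓn3]
  have hint : ∫ τ in (0:ℝ)..1, II (b-1) a (-a) (τ*x) * τ^n * (-1+2*x*τ)
      = ((2*x-1) * II (b-1) (a+1) (-a) x - 2*x/(a+2) * II (b-1) (a+2) (-a) x) / (a+1) := by
    rw [eq_div_iff ha1.ne']
    linear_combination hmain
  rw [hint]
  field_simp

lemma bridge_hyper {n : ℕ} (hn : 2 ≤ n) {x : ℝ} (hx : x < 1) :
    (1-x) * hyper (aCoef n) (bCoef n) ((n:ℝ)+1) x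
      + (((n:ℝ)+3)*x-((n:ℝ)+1))/((n:ℝ)+1) * hyper (aCoef n) (bCoef n) ((n:ℝ)+2) x
      - 2*x/((n:ℝ)+2) * hyper (aCoef n) (bCoef n) ((n:ℝ)+3) x = 0 := by
  obtain ⟨ha, ha0, hbl, hbu⟩ := coef_facts hn
  set a := aCoef (n:ℝ) with hadef
  set b := bCoef (n:ℝ) with hbdef
  have hab : a + b = (n:ℝ) := coef_add _
  have hm : a * b = -2 := coef_mul _
  have hn2 : (2:ℝ) ≤ (n:ℝ) := by exact_mod_cast hn
  have hb1 : 1 ≤ b := by linarith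
  have hb0 : 0 < b := by linarith
  have ha1 : (0:ℝ) < a + 1 := by linarith
  have ha2 : (0:ℝ) < a + 2 := by linarith
  have hΓb : Real.Gamma b ≠ 0 := (Real.Gamma_pos_of_pos hb0).ne'
  have hΓa1 : Real.Gamma (a+1) ≠ 0 := (Real.Gamma_pos_of_pos ha1).ne'
  have hΓn1 : Real.Gamma ((n:ℝ)+1) ≠ 0 := (Real.Gamma_pos_of_pos (by linarith)).ne'
  have hΓa2 : Real.Gamma (a+2) = (a+1) * Real.Gamma (a+1) := by
    rw [show a+2 = (a+1)+1 by ring, Real.Gamma_add_one ha1.ne']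
  have hΓa3 : Real.Gamma (a+3) = (a+2) * ((a+1) * Real.Gamma (a+1)) := by
    rw [show a+3 = (a+2)+1 by ring, Real.Gamma_add_one ha2.ne', hΓa2]
  have hΓn2 : Real.Gamma ((n:ℝ)+2) = ((n:ℝ)+1) * Real.Gamma ((n:ℝ)+1) := by
    rw [show (n:ℝ)+2 = ((n:ℝ)+1)+1 by ring, Real.Gamma_add_one (by linarith)]
  have hΓn3 : Real.Gamma ((n:ℝ)+3) = ((n:ℝ)+2) * (((n:ℝ)+1) * Real.Gamma ((n:ℝ)+1)) := by
    rw [show (n:ℝ)+3 = ((n:ℝ)+2)+1 by ring, Real.Gamma_add_one (by linarith), hΓn2]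
  rw [hyper_euler hbu hb0, hyper_euler (show b < (n:ℝ)+2 by linarith) hb0,
    hyper_euler (show b < (n:ℝ)+3 by linarith) hb0,
    show (n:ℝ)+1-b = a+1 by linarith, show a+1-1 = a by ring,
    show (n:ℝ)+2-b = a+2 by linarith, show a+2-1 = a+1 by ring,
    show (n:ℝ)+3-b = a+3 by linarith, show a+3-1 = a+2 by ring,
    hΓa2, hΓa3, hΓn2, hΓn3]
  have hB := bridge_II ha ha0 hb1 hx
  have hbb : (a+2)*(b+2) = 2*((n:ℝ)+1) := by nlinarith [hab, hm]
  have key : (1-x)*(a+1)*(a+2) * II (b-1) a (-a) x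
      + (((n:ℝ)+3)*x-((n:ℝ)+1))*(a+2) * II (b-1) (a+1) (-a) x
      - 2*x*((n:ℝ)+1) * II (b-1) (a+2) (-a) x = 0 := by
    linear_combination (a+2) * hB + (a+2) * II (b-1) (a+1) (-a) x * (1-x) * hab
      + x * II (b-1) (a+2) (-a) x * hbb
  have hrw : (1-x) * (Real.Gamma ((n:ℝ)+1) / (Real.Gamma b * Real.Gamma (a+1)) * II (b-1) a (-a) x)
      + (((n:ℝ)+3)*x-((n:ℝ)+1))/((n:ℝ)+1) * (((n:ℝ)+1) * Real.Gamma ((n:ℝ)+1)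
          / (Real.Gamma b * ((a+1) * Real.Gamma (a+1))) * II (b-1) (a+1) (-a) x)
      - 2*x/((n:ℝ)+2) * (((n:ℝ)+2) * (((n:ℝ)+1) * Real.Gamma ((n:ℝ)+1))
          / (Real.Gamma b * ((a+2) * ((a+1) * Real.Gamma (a+1)))) * II (b-1) (a+2) (-a) x)
      = Real.Gamma ((n:ℝ)+1) / (Real.Gamma b * Real.Gamma (a+1) * (a+1) * (a+2))
        * ((1-x)*(a+1)*(a+2) * II (b-1) a (-a) x
          + (((n:ℝ)+3)*x-((n:ℝ)+1))*(a+2) * II (b-1) (a+1) (-a) x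
          - 2*x*((n:ℝ)+1) * II (b-1) (a+2) (-a) x) := by
    field_simp
  rw [hrw, key, mul_zero]

lemma sqrt_nine : Real.sqrt ((1:ℝ)^2 + 8) = 3 := by
  rw [show (1:ℝ)^2+8 = 3^2 by norm_num, Real.sqrt_sq (by norm_num)]

lemma aCoef_one : aCoef 1 = -1 := by rw [aCoef, sqrt_nine]; norm_num
lemma bCoef_one : bCoef 1 = 2 := by rw [bCoef, sqrt_nine]; norm_num

lemma poch_neg_one (m : ℕ) : poch (-1) (m+2) = 0 := by
  induction m with
  | zero =>
    rw [poch, ascPochhammer_succ_eval]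
    push_cast
    norm_num
  | succ k ih =>
    rw [poch, show k+1+2 = (k+2)+1 by omega, ascPochhammer_succ_eval]
    rw [poch] at ih
    rw [ih]
    ring

lemma hyper_one_two_two (y : ℝ) : hyper (-1) 2 2 y = 1 - y := by
  rw [hyper, if_neg (by norm_num)]
  rw [tsum_eq_sum (s := {0, 1}) (by
    intro k hk
    simp only [Finset.mem_insert, Finset.mem_singleton] at hk
    push_neg at hk
    obtain ⟨h0, h1⟩ := hk
    have : ∃ m, k = m + 2 := ⟨k - 2, by omega⟩
    obtain ⟨m, rfl⟩ := this
    rw [poch_neg_one]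
    ring)]
  rw [Finset.sum_insert (by norm_num), Finset.sum_singleton]
  simp only [poch, ascPochhammer_zero, ascPochhammer_one, Polynomial.eval_one, Polynomial.eval_X]
  norm_num
  ring

lemma Gamma_three : Real.Gamma 3 = 2 := by
  rw [show (3:ℝ) = 2+1 by norm_num, Real.Gamma_add_one (by norm_num), Real.Gamma_two]
  norm_num

lemma Gamma_four : Real.Gamma 4 = 6 := by
  rw [show (4:ℝ) = 3+1 by norm_num, Real.Gamma_add_one (by norm_num), Gamma_three]
  norm_num

lemma hyper_one_two_three (y : ℝ) : hyper (-1) 2 3 y = 1 - 2*y/3 := by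
  rw [hyper, if_pos (by norm_num)]
  have h1 : ∫ t in (0:ℝ)..1, t ^ ((2:ℝ) - 1) * (1 - t) ^ ((3:ℝ) - 2 - 1) * (1 - y * t) ^ (-(-1):ℝ)
      = ∫ t in (0:ℝ)..1, (t - y * t^2) := by
    apply intervalIntegral.integral_congr
    intro t _
    norm_num
    ring
  rw [h1, intervalIntegral.integral_sub intervalIntegrable_id
    ((intervalIntegral.intervalIntegrable_pow 2).const_mul y),
    intervalIntegral.integral_const_mul, integral_id, integral_pow]
  rw [show (3:ℝ) - 2 = 1 by norm_num, Real.Gamma_one, Real.Gamma_two, Gamma_three]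
  norm_num
  ring

lemma hyper_one_two_four (y : ℝ) : hyper (-1) 2 4 y = 1 - y/2 := by
  rw [hyper, if_pos (by norm_num)]
  have h1 : ∫ t in (0:ℝ)..1, t ^ ((2:ℝ) - 1) * (1 - t) ^ ((4:ℝ) - 2 - 1) * (1 - y * t) ^ (-(-1):ℝ)
      = ∫ t in (0:ℝ)..1, ((t - t^2) - y * (t^2 - t^3)) := by
    apply intervalIntegral.integral_congr
    intro t _
    norm_num
    ring
  have i2 : IntervalIntegrable (fun t : ℝ => t^2 - t^3) volume 0 1 :=
    (intervalIntegral.intervalIntegrable_pow 2).sub (intervalIntegral.intervalIntegrable_pow 3)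
  rw [h1, intervalIntegral.integral_sub
    (intervalIntegrable_id.sub (intervalIntegral.intervalIntegrable_pow 2)) (i2.const_mul y),
    intervalIntegral.integral_sub intervalIntegrable_id (intervalIntegral.intervalIntegrable_pow 2),
    intervalIntegral.integral_const_mul,
    intervalIntegral.integral_sub (intervalIntegral.intervalIntegrable_pow 2)
      (intervalIntegral.intervalIntegrable_pow 3),
    integral_id, integral_pow, integral_pow]
  rw [show (4:ℝ) - 2 = 2 by norm_num, Real.Gamma_two, Gamma_four]
  norm_num
  ring

lemma S1_ge2 {n : ℕ} (hn : 2 ≤ n) {x : ℝ} (hx : x < 1) (A B : ℝ) :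
    zetaDisp A B n x =
      (1 + x * ((A + 2 * B) / (A * ((n : ℝ) + 1)) - 1)) *
          hyper (aCoef n) (bCoef n) ((n : ℝ) + 1) x
        + (2 * x - 1) / ((n : ℝ) + 1) * hyper (aCoef n) (bCoef n) ((n : ℝ) + 2) x
        - 2 * x / (((n : ℝ) + 1) * ((n : ℝ) + 2)) * hyper (aCoef n) (bCoef n) ((n : ℝ) + 3) x := by
  rw [zetaDisp]
  simp only [Fhyp]
  rw [id1_int hn hx]
  ring

lemma poly_int {x : ℝ} :
    ∫ τ in (0:ℝ)..1, (1 - τ*x) * τ^1 * (-1 + 2*x*τ) = -(1/2) + x - x^2/2 := by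
  have h1 : ∫ τ in (0:ℝ)..1, (1 - τ*x) * τ^1 * (-1 + 2*x*τ)
      = ∫ τ in (0:ℝ)..1, ((3*x) * τ^2 - (τ + (2*x^2) * τ^3)) := by
    apply intervalIntegral.integral_congr
    intro τ _
    beta_reduce
    ring
  have i2 : IntervalIntegrable (fun τ : ℝ => (3*x) * τ^2) volume 0 1 :=
    (intervalIntegral.intervalIntegrable_pow 2).const_mul _
  have i3 : IntervalIntegrable (fun τ : ℝ => τ + (2*x^2) * τ^3) volume 0 1 :=
    intervalIntegral.intervalIntegrable_id.add
      ((intervalIntegral.intervalIntegrable_pow 3).const_mul _)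
  rw [h1, intervalIntegral.integral_sub i2 i3,
    intervalIntegral.integral_const_mul,
    intervalIntegral.integral_add intervalIntegral.intervalIntegrable_id
      ((intervalIntegral.intervalIntegrable_pow 3).const_mul _),
    intervalIntegral.integral_const_mul, integral_id, integral_pow, integral_pow]
  norm_num
  ring

lemma S1_one {x : ℝ} (hx : x < 1) (A B : ℝ) :
    zetaDisp A B 1 x =
      (1 + x * ((A + 2 * B) / (A * ((1 : ℕ) + 1 : ℝ)) - 1)) *
          hyper (aCoef (1:ℕ)) (bCoef (1:ℕ)) (((1:ℕ) : ℝ) + 1) x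
        + (2 * x - 1) / (((1:ℕ) : ℝ) + 1) * hyper (aCoef (1:ℕ)) (bCoef (1:ℕ)) (((1:ℕ) : ℝ) + 2) x
        - 2 * x / ((((1:ℕ) : ℝ) + 1) * (((1:ℕ) : ℝ) + 2)) *
            hyper (aCoef (1:ℕ)) (bCoef (1:ℕ)) (((1:ℕ) : ℝ) + 3) x := by
  rw [zetaDisp]
  simp only [Fhyp, Nat.cast_one, aCoef_one, bCoef_one,
    show (1:ℝ) + 1 = 2 by norm_num, show (1:ℝ) + 2 = 3 by norm_num,
    show (1:ℝ) + 3 = 4 by norm_num,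
    hyper_one_two_two, hyper_one_two_three, hyper_one_two_four]
  rw [poly_int]
  ring

lemma bridge_one {x : ℝ} :
    (1-x) * hyper (aCoef (1:ℕ)) (bCoef (1:ℕ)) (((1:ℕ):ℝ)+1) x
      + ((((1:ℕ):ℝ)+3)*x-(((1:ℕ):ℝ)+1))/(((1:ℕ):ℝ)+1) * hyper (aCoef (1:ℕ)) (bCoef (1:ℕ)) (((1:ℕ):ℝ)+2) x
      - 2*x/(((1:ℕ):ℝ)+2) * hyper (aCoef (1:ℕ)) (bCoef (1:ℕ)) (((1:ℕ):ℝ)+3) x = 0 := by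
  simp only [Nat.cast_one, aCoef_one, bCoef_one,
    show (1:ℝ) + 1 = 2 by norm_num, show (1:ℝ) + 2 = 3 by norm_num,
    show (1:ℝ) + 3 = 4 by norm_num,
    hyper_one_two_two, hyper_one_two_three, hyper_one_two_four]
  ring

/-- the two reformulations of the dispersion function `ζ_n` in terms of
Gauss hypergeometric functions with third parameters `n+1`, `n+2`, `n+3`. -/
theorem zetaDisp_identities (A B : ℝ) (hA : A ≠ 0) (n : ℕ) (hn : 1 ≤ n) (x : ℝ) (hx : x < 1) :
    zetaDisp A B n x =
      (1 + x * ((A + 2 * B) / (A * ((n : ℝ) + 1)) - 1)) *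
          hyper (aCoef n) (bCoef n) ((n : ℝ) + 1) x
        + (2 * x - 1) / ((n : ℝ) + 1) * hyper (aCoef n) (bCoef n) ((n : ℝ) + 2) x
        - 2 * x / (((n : ℝ) + 1) * ((n : ℝ) + 2)) * hyper (aCoef n) (bCoef n) ((n : ℝ) + 3) x
    ∧ zetaDisp A B n x =
      (A + 2 * B) / (A * ((n : ℝ) + 1)) * x * hyper (aCoef n) (bCoef n) ((n : ℝ) + 1) x
        + ((n : ℝ) - ((n : ℝ) + 1) * x) / ((n : ℝ) + 1) *
            hyper (aCoef n) (bCoef n) ((n : ℝ) + 2) x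
        + 2 * (n : ℝ) * x / (((n : ℝ) + 1) * ((n : ℝ) + 2)) *
            hyper (aCoef n) (bCoef n) ((n : ℝ) + 3) x := by
  have hn1 : ((n:ℝ)+1) ≠ 0 := by positivity
  have hn2 : ((n:ℝ)+2) ≠ 0 := by positivity
  have S1 : zetaDisp A B n x =
      (1 + x * ((A + 2 * B) / (A * ((n : ℝ) + 1)) - 1)) *
          hyper (aCoef n) (bCoef n) ((n : ℝ) + 1) x
        + (2 * x - 1) / ((n : ℝ) + 1) * hyper (aCoef n) (bCoef n) ((n : ℝ) + 2) x
        - 2 * x / (((n : ℝ) + 1) * ((n : ℝ) + 2)) * hyper (aCoef n) (bCoef n) ((n : ℝ) + 3) x := by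
    rcases eq_or_lt_of_le hn with h1 | h2
    · subst h1
      exact S1_one hx A B
    · exact S1_ge2 h2 hx A B
  have BR : (1-x) * hyper (aCoef n) (bCoef n) ((n:ℝ)+1) x
      + (((n:ℝ)+3)*x-((n:ℝ)+1))/((n:ℝ)+1) * hyper (aCoef n) (bCoef n) ((n:ℝ)+2) x
      - 2*x/((n:ℝ)+2) * hyper (aCoef n) (bCoef n) ((n:ℝ)+3) x = 0 := by
    rcases eq_or_lt_of_le hn with h1 | h2
    · subst h1
      exact bridge_one
    · exact bridge_hyper h2 hx
  refine ⟨S1, ?_⟩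
  have key : (A + 2 * B) / (A * ((n : ℝ) + 1)) * x * hyper (aCoef n) (bCoef n) ((n : ℝ) + 1) x
        + ((n : ℝ) - ((n : ℝ) + 1) * x) / ((n : ℝ) + 1) *
            hyper (aCoef n) (bCoef n) ((n : ℝ) + 2) x
        + 2 * (n : ℝ) * x / (((n : ℝ) + 1) * ((n : ℝ) + 2)) *
            hyper (aCoef n) (bCoef n) ((n : ℝ) + 3) x
      = ((1 + x * ((A + 2 * B) / (A * ((n : ℝ) + 1)) - 1)) *
          hyper (aCoef n) (bCoef n) ((n : ℝ) + 1) x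
        + (2 * x - 1) / ((n : ℝ) + 1) * hyper (aCoef n) (bCoef n) ((n : ℝ) + 2) x
        - 2 * x / (((n : ℝ) + 1) * ((n : ℝ) + 2)) * hyper (aCoef n) (bCoef n) ((n : ℝ) + 3) x)
      - ((1-x) * hyper (aCoef n) (bCoef n) ((n:ℝ)+1) x
        + (((n:ℝ)+3)*x-((n:ℝ)+1))/((n:ℝ)+1) * hyper (aCoef n) (bCoef n) ((n:ℝ)+2) x
        - 2*x/((n:ℝ)+2) * hyper (aCoef n) (bCoef n) ((n:ℝ)+3) x) := by
    field_simp
    ring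
  rw [key, BR, sub_zero, ← S1]
end

section
/- There exists C>0 such that for every integer n≥2 and every x∈[0,1]: |F(a_n,b_n;n+1;x)−1|≤C·ln n/n; 1≤F(a_n+1,b_n;n+2;x)≤C·n; and |F(a_n,b_n;n+3;x)−1|≤C·ln n/n. -/
open MeasureTheory Real Set

open MeasureTheory Real Set

lemma betaReal {b d : ℝ} (hb : 0 < b) (hd : 0 < d) :
    ∫ t in (0:ℝ)..1, t ^ (b - 1) * (1 - t) ^ (d - 1)
      = Real.Gamma b * Real.Gamma d / Real.Gamma (b + d) := by
  have key : Complex.Gamma b * Complex.Gamma d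
      = Complex.Gamma (b + d) * Complex.betaIntegral b d :=
    Complex.Gamma_mul_Gamma_eq_betaIntegral (by simpa using hb) (by simpa using hd)
  have hI : Complex.betaIntegral b d
      = ((∫ t in (0:ℝ)..1, t ^ (b - 1) * (1 - t) ^ (d - 1) : ℝ) : ℂ) := by
    rw [Complex.betaIntegral, ← intervalIntegral.integral_ofReal]
    rw [intervalIntegral.integral_of_le zero_le_one,
        intervalIntegral.integral_of_le zero_le_one]
    refine setIntegral_congr_fun measurableSet_Ioc fun t ht => ?_
    rw [Complex.ofReal_mul, Complex.ofReal_cpow ht.1.le,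
        Complex.ofReal_cpow (by linarith [ht.2] : (0:ℝ) ≤ 1 - t)]
    push_cast
    ring
  have hne : Complex.Gamma ((b:ℂ) + d) ≠ 0 := by
    rw [show ((b:ℂ) + d) = ((b + d : ℝ) : ℂ) by push_cast; ring, Complex.Gamma_ofReal]
    exact_mod_cast (Real.Gamma_pos_of_pos (by linarith)).ne'
  rw [hI] at key
  have : ((Real.Gamma b * Real.Gamma d : ℝ) : ℂ)
      = ((Real.Gamma (b + d) * ∫ t in (0:ℝ)..1, t ^ (b - 1) * (1 - t) ^ (d - 1) : ℝ) : ℂ) := by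
    push_cast
    rw [← Complex.Gamma_ofReal, ← Complex.Gamma_ofReal, ← Complex.Gamma_ofReal]
    push_cast
    exact key
  have h2 := Complex.ofReal_injective this
  have hG : Real.Gamma (b + d) ≠ 0 := (Real.Gamma_pos_of_pos (by linarith)).ne'
  field_simp
  linarith [h2]

lemma gamma_step {x s : ℝ} (hx : 0 < x) (hs0 : 0 ≤ s) (hs1 : s ≤ 1) :
    Real.Gamma (x + s) ≤ Real.Gamma x * x ^ s := by
  have h := Real.convexOn_log_Gamma.2 (mem_Ioi.2 hx) (mem_Ioi.2 (by linarith : (0:ℝ) < x + 1))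
    (by linarith : (0:ℝ) ≤ 1 - s) hs0 (by ring)
  simp only [Function.comp_apply, smul_eq_mul] at h
  have hxs : (1 - s) * x + s * (x + 1) = x + s := by ring
  rw [hxs] at h
  have hg1 : Real.Gamma (x + 1) = x * Real.Gamma x := Real.Gamma_add_one hx.ne'
  have hgx : 0 < Real.Gamma x := Real.Gamma_pos_of_pos hx
  have hgxs : 0 < Real.Gamma (x + s) := Real.Gamma_pos_of_pos (by linarith)
  have : Real.log (Real.Gamma (x + s)) ≤ Real.log (Real.Gamma x) + s * Real.log x := by
    rw [hg1, Real.log_mul hx.ne' hgx.ne'] at h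
    nlinarith [h]
  calc Real.Gamma (x + s) = Real.exp (Real.log (Real.Gamma (x + s))) := (Real.exp_log hgxs).symm
    _ ≤ Real.exp (Real.log (Real.Gamma x) + s * Real.log x) := Real.exp_le_exp.2 this
    _ = Real.Gamma x * x ^ s := by
        rw [Real.exp_add, Real.exp_log hgx, Real.rpow_def_of_pos hx]
        ring_nf

lemma intOn_base {q : ℝ} (hq : -1 < q) :
    IntegrableOn (fun t : ℝ => (1 - t) ^ q) (Ioo 0 1) := by
  have h := (intervalIntegral.intervalIntegrable_rpow' (a := 0) (b := 1) (r := q) hq).comp_sub_left 1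
  simp only [sub_zero, sub_self] at h
  replace h := h.symm
  rw [intervalIntegrable_iff_integrableOn_Ioc_of_le zero_le_one] at h
  exact h.mono_set Ioo_subset_Ioc_self

lemma meas_full (b q e x : ℝ) :
    Measurable (fun t : ℝ => t ^ (b - 1) * (1 - t) ^ q * (1 - x * t) ^ e) := by
  apply Measurable.mul
  apply Measurable.mul
  · exact measurable_id.pow measurable_const
  · exact (measurable_const.sub measurable_id).pow measurable_const
  · exact (measurable_const.sub (measurable_id.const_mul x)).pow measurable_const

lemma intOn_g {b q : ℝ} (hb : 1 ≤ b) (hq : -1 < q) :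
    IntegrableOn (fun t : ℝ => t ^ (b - 1) * (1 - t) ^ q) (Ioo 0 1) := by
  refine Integrable.mono (intOn_base hq) ?_ ?_
  · exact ((measurable_id.pow measurable_const).mul
      ((measurable_const.sub measurable_id).pow measurable_const)).aestronglyMeasurable
  · rw [ae_restrict_iff' measurableSet_Ioo]
    refine ae_of_all _ fun t ht => ?_
    have h1 : (0:ℝ) < t := ht.1
    have h2 : t < 1 := ht.2
    have hp1 : (0:ℝ) ≤ t ^ (b - 1) := rpow_nonneg h1.le _
    have hp2 : (0:ℝ) ≤ (1 - t) ^ q := rpow_nonneg (by linarith) _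
    rw [Real.norm_eq_abs, Real.norm_eq_abs, abs_of_nonneg (mul_nonneg hp1 hp2),
      abs_of_nonneg hp2]
    have : t ^ (b - 1) ≤ 1 := rpow_le_one h1.le h2.le (by linarith)
    nlinarith
open MeasureTheory Real Set

section
variable {b q e x : ℝ}

-- pointwise bounds on Ioo
lemma ptwise_pos (he : 0 ≤ e) (hx0 : 0 ≤ x) (hx1 : x ≤ 1) {t : ℝ} (ht : t ∈ Ioo (0:ℝ) 1) :
    (1 - t) ^ e ≤ (1 - x * t) ^ e ∧ (1 - x * t) ^ e ≤ 1 := by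
  have h1 : (0:ℝ) < 1 - t := by linarith [ht.2]
  have h2 : x * t ≤ t := by nlinarith [ht.1.le]
  have h3 : 0 ≤ x * t := mul_nonneg hx0 ht.1.le
  constructor
  · exact Real.rpow_le_rpow h1.le (by linarith) he
  · exact Real.rpow_le_one (by linarith) (by linarith) he

lemma ptwise_neg (he : e ≤ 0) (hx0 : 0 ≤ x) (hx1 : x ≤ 1) {t : ℝ} (ht : t ∈ Ioo (0:ℝ) 1) :
    (1:ℝ) ≤ (1 - x * t) ^ e ∧ (1 - x * t) ^ e ≤ (1 - t) ^ e := by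
  have h1 : (0:ℝ) < 1 - t := by linarith [ht.2]
  have h2 : x * t ≤ t := by nlinarith [ht.1.le]
  have h3 : 0 ≤ x * t := mul_nonneg hx0 ht.1.le
  constructor
  · exact Real.one_le_rpow_of_pos_of_le_one_of_nonpos (by linarith) (by linarith) he
  · exact Real.rpow_le_rpow_of_nonpos h1 (by linarith) he

lemma intOn_full (hb : 1 ≤ b) (hq : -1 < q + min e 0) (hx0 : 0 ≤ x) (hx1 : x ≤ 1) :
    IntegrableOn (fun t : ℝ => t ^ (b - 1) * (1 - t) ^ q * (1 - x * t) ^ e) (Ioo 0 1) := by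
  refine Integrable.mono (intOn_base hq) (meas_full b q e x).aestronglyMeasurable ?_
  rw [ae_restrict_iff' measurableSet_Ioo]
  refine ae_of_all _ fun t ht => ?_
  have h1 : (0:ℝ) < t := ht.1
  have h2 : (0:ℝ) < 1 - t := by linarith [ht.2]
  have hxt : (0:ℝ) < 1 - x * t := by nlinarith [ht.1.le, ht.2]
  have hp1 : (0:ℝ) ≤ t ^ (b - 1) := rpow_nonneg h1.le _
  have hp2 : (0:ℝ) ≤ (1 - t) ^ q := rpow_nonneg h2.le _
  have hp3 : (0:ℝ) ≤ (1 - x * t) ^ e := rpow_nonneg hxt.le _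
  rw [Real.norm_eq_abs, Real.norm_eq_abs, abs_of_nonneg (by positivity),
    abs_of_nonneg (rpow_nonneg h2.le _)]
  have htb : t ^ (b - 1) ≤ 1 := rpow_le_one h1.le (by linarith [ht.2]) (by linarith)
  rcases le_or_gt 0 e with he | he
  · have h := (ptwise_pos he hx0 hx1 ht).2
    have hmin : min e 0 = 0 := min_eq_right he
    rw [hmin, add_zero]
    calc t ^ (b-1) * (1-t) ^ q * (1 - x*t) ^ e
        ≤ t ^ (b-1) * (1-t) ^ q := mul_le_of_le_one_right (mul_nonneg hp1 hp2) h
      _ ≤ (1-t) ^ q := mul_le_of_le_one_left hp2 htb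
  · have h := (ptwise_neg he.le hx0 hx1 ht).2
    have hmin : min e 0 = e := min_eq_left he.le
    rw [hmin, Real.rpow_add h2, mul_assoc]
    calc t ^ (b-1) * ((1-t) ^ q * (1 - x*t) ^ e)
        ≤ (1-t) ^ q * (1 - x*t) ^ e := mul_le_of_le_one_left (mul_nonneg hp2 hp3) htb
      _ ≤ (1-t) ^ q * (1-t) ^ e := mul_le_mul_of_nonneg_left h hp2

lemma J_le_of_pos (hb : 1 ≤ b) (hq : -1 < q) (he : 0 ≤ e) (hx0 : 0 ≤ x) (hx1 : x ≤ 1) :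
    ∫ t in Ioo (0:ℝ) 1, t ^ (b - 1) * (1 - t) ^ q * (1 - x * t) ^ e
      ≤ ∫ t in Ioo (0:ℝ) 1, t ^ (b - 1) * (1 - t) ^ q := by
  refine setIntegral_mono_on
    (intOn_full hb (by simpa [min_eq_right he] using hq) hx0 hx1) (intOn_g hb hq)
    measurableSet_Ioo fun t ht => ?_
  have h := (ptwise_pos he hx0 hx1 ht).2
  have hp : (0:ℝ) ≤ t ^ (b-1) * (1-t) ^ q :=
    mul_nonneg (rpow_nonneg ht.1.le _) (rpow_nonneg (by linarith [ht.2]) _)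
  nlinarith [rpow_nonneg (show (0:ℝ) ≤ 1 - x*t by nlinarith [ht.1.le, ht.2, mul_nonneg hx0 ht.1.le]) e]

lemma J_ge_of_pos (hb : 1 ≤ b) (hq : -1 < q) (he : 0 ≤ e) (hx0 : 0 ≤ x) (hx1 : x ≤ 1) :
    ∫ t in Ioo (0:ℝ) 1, t ^ (b - 1) * (1 - t) ^ (q + e)
      ≤ ∫ t in Ioo (0:ℝ) 1, t ^ (b - 1) * (1 - t) ^ q * (1 - x * t) ^ e := by
  refine setIntegral_mono_on (intOn_g hb (by linarith))
    (intOn_full hb (by simpa [min_eq_right he] using hq) hx0 hx1)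
    measurableSet_Ioo fun t ht => ?_
  have h2 : (0:ℝ) < 1 - t := by linarith [ht.2]
  have h := (ptwise_pos he hx0 hx1 ht).1
  rw [Real.rpow_add h2, ← mul_assoc]
  have hp : (0:ℝ) ≤ t ^ (b-1) * (1-t) ^ q :=
    mul_nonneg (rpow_nonneg ht.1.le _) (rpow_nonneg h2.le _)
  nlinarith [rpow_nonneg h2.le e]

lemma J_ge_of_neg (hb : 1 ≤ b) (hq : -1 < q + e) (he : e ≤ 0) (hx0 : 0 ≤ x) (hx1 : x ≤ 1) :
    ∫ t in Ioo (0:ℝ) 1, t ^ (b - 1) * (1 - t) ^ q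
      ≤ ∫ t in Ioo (0:ℝ) 1, t ^ (b - 1) * (1 - t) ^ q * (1 - x * t) ^ e := by
  have hq' : -1 < q := by linarith
  refine setIntegral_mono_on (intOn_g hb hq')
    (intOn_full hb (by simpa [min_eq_left he] using hq) hx0 hx1)
    measurableSet_Ioo fun t ht => ?_
  have h := (ptwise_neg he hx0 hx1 ht).1
  have hp : (0:ℝ) ≤ t ^ (b-1) * (1-t) ^ q :=
    mul_nonneg (rpow_nonneg ht.1.le _) (rpow_nonneg (by linarith [ht.2]) _)
  nlinarith

lemma J_le_of_neg (hb : 1 ≤ b) (hq : -1 < q + e) (he : e ≤ 0) (hx0 : 0 ≤ x) (hx1 : x ≤ 1) :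
    ∫ t in Ioo (0:ℝ) 1, t ^ (b - 1) * (1 - t) ^ q * (1 - x * t) ^ e
      ≤ ∫ t in Ioo (0:ℝ) 1, t ^ (b - 1) * (1 - t) ^ (q + e) := by
  refine setIntegral_mono_on
    (intOn_full hb (by simpa [min_eq_left he] using hq) hx0 hx1)
    (intOn_g hb hq) measurableSet_Ioo fun t ht => ?_
  have h2 : (0:ℝ) < 1 - t := by linarith [ht.2]
  have h := (ptwise_neg he hx0 hx1 ht).2
  rw [Real.rpow_add h2, ← mul_assoc]
  have hp : (0:ℝ) ≤ t ^ (b-1) * (1-t) ^ q :=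
    mul_nonneg (rpow_nonneg ht.1.le _) (rpow_nonneg h2.le _)
  nlinarith [Real.one_le_rpow_of_pos_of_le_one_of_nonpos
    (show (0:ℝ) < 1 - x*t by nlinarith [ht.1.le, ht.2, mul_nonneg hx0 ht.1.le])
    (by nlinarith [mul_nonneg hx0 ht.1.le]) he]

end

lemma betaIoo {b d : ℝ} (hb : 0 < b) (hd : 0 < d) :
    ∫ t in Ioo (0:ℝ) 1, t ^ (b - 1) * (1 - t) ^ (d - 1)
      = Real.Gamma b * Real.Gamma d / Real.Gamma (b + d) := by
  rw [← integral_Ioc_eq_integral_Ioo, ← intervalIntegral.integral_of_le zero_le_one]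
  exact betaReal hb hd

lemma hyper_eq {a b c x : ℝ} (h1 : b < c) (h2 : 0 < b) :
    hyper a b c x = Real.Gamma c / (Real.Gamma b * Real.Gamma (c - b)) *
      ∫ t in Ioo (0:ℝ) 1, t ^ (b - 1) * (1 - t) ^ (c - b - 1) * (1 - x * t) ^ (-a) := by
  rw [hyper, if_pos ⟨h1, h2⟩, intervalIntegral.integral_of_le zero_le_one,
    integral_Ioc_eq_integral_Ioo]

lemma g_mono {b ε : ℝ} (hb : 1 ≤ b) (hε0 : 0 ≤ ε) (hε1 : ε < 1) :
    ∫ t in Ioo (0:ℝ) 1, t ^ (b - 1) * (1 - t) ^ (1:ℝ)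
      ≤ ∫ t in Ioo (0:ℝ) 1, t ^ (b - 1) * (1 - t) ^ (1 - ε) := by
  refine setIntegral_mono_on (intOn_g hb (by norm_num)) (intOn_g hb (by linarith))
    measurableSet_Ioo fun t ht => ?_
  refine mul_le_mul_of_nonneg_left ?_ (rpow_nonneg ht.1.le _)
  exact Real.rpow_le_rpow_of_exponent_ge (by linarith [ht.2]) (by linarith [ht.1]) (by linarith)

lemma numeric_bound {N ε : ℝ} (hN : 2 ≤ N) (hε0 : 0 < ε) (hε2 : ε ≤ 2 / N)
    {M : ℝ} (hM : M ≤ N ^ 3) (hM1 : 1 ≤ M) :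
    ε * Real.log M + ε ≤ 16 * Real.log N / N := by
  have hN0 : (0:ℝ) < N := by linarith
  have hlogN : (0:ℝ) < Real.log N := Real.log_pos (by linarith)
  have h2 : Real.log M ≤ 3 * Real.log N := by
    calc Real.log M ≤ Real.log (N ^ 3) := Real.log_le_log (by linarith) hM
      _ = 3 * Real.log N := by
          rw [show N ^ 3 = N * (N * N) by ring, Real.log_mul hN0.ne' (by positivity),
            Real.log_mul hN0.ne' hN0.ne']; ring
  have h3 : (1:ℝ) ≤ 2 * Real.log N := by
    have := Real.log_two_gt_d9
    have hl : Real.log 2 ≤ Real.log N := Real.log_le_log two_pos hN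
    linarith
  have hlogM : 0 ≤ Real.log M := Real.log_nonneg hM1
  have e1 : ε * Real.log M ≤ (2 / N) * (3 * Real.log N) :=
    mul_le_mul hε2 h2 hlogM (by positivity)
  have e2 : ε ≤ (2 / N) * (2 * Real.log N) := by
    calc ε ≤ 2 / N := hε2
      _ = (2 / N) * 1 := by ring
      _ ≤ (2 / N) * (2 * Real.log N) := by
          apply mul_le_mul_of_nonneg_left h3 (by positivity)
  have : (2 / N) * (3 * Real.log N) + (2 / N) * (2 * Real.log N) ≤ 16 * Real.log N / N := by
    have heq : 2 / N * (3 * Real.log N) + 2 / N * (2 * Real.log N) = 10 * Real.log N / N := by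
      field_simp; ring
    rw [heq, div_le_div_iff_of_pos_right hN0]
    linarith
  linarith

lemma est1 {N ε x : ℝ} (hN : 2 ≤ N) (hε0 : 0 < ε) (hε1 : ε < 1) (hε2 : ε ≤ 2 / N)
    (ha : aCoef N = -ε) (hb : bCoef N = N + ε) (hx0 : 0 ≤ x) (hx1 : x ≤ 1) :
    |hyper (aCoef N) (bCoef N) (N + 1) x - 1| ≤ 16 * Real.log N / N := by
  have hb0 : (0:ℝ) < N + ε := by linarith
  have hb1 : (1:ℝ) ≤ N + ε := by linarith
  rw [ha, hb, hyper_eq (by linarith) hb0]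
  rw [show N + 1 - (N + ε) - 1 = -ε by ring, show N + 1 - (N + ε) = 1 - ε by ring,
    show -(-ε) = ε by ring]
  set G1 := Real.Gamma (N + ε) with hG1
  set G2 := Real.Gamma (1 - ε) with hG2
  set G3 := Real.Gamma (N + 1) with hG3
  have hG1p : 0 < G1 := Real.Gamma_pos_of_pos hb0
  have hG2p : 0 < G2 := Real.Gamma_pos_of_pos (by linarith)
  have hG3p : 0 < G3 := Real.Gamma_pos_of_pos (by linarith)
  set J := ∫ t in Ioo (0:ℝ) 1, t ^ (N + ε - 1) * (1 - t) ^ (-ε) * (1 - x * t) ^ ε with hJ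
  -- upper bound for J
  have hbeta1 : ∫ t in Ioo (0:ℝ) 1, t ^ (N + ε - 1) * (1 - t) ^ (-ε) = G1 * G2 / G3 := by
    have h := betaIoo (b := N + ε) (d := 1 - ε) hb0 (by linarith)
    rw [show (1:ℝ) - ε - 1 = -ε by ring, show N + ε + (1 - ε) = N + 1 by ring] at h
    exact h
  have hJup : J ≤ G1 * G2 / G3 := by
    rw [← hbeta1]; exact J_le_of_pos hb1 (by linarith) hε0.le hx0 hx1
  -- lower bound for J
  have hbeta0 : ∫ t in Ioo (0:ℝ) 1, t ^ (N + ε - 1) * (1 - t) ^ (-ε + ε) = 1 / (N + ε) := by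
    have h := betaIoo (b := N + ε) (d := 1) hb0 one_pos
    rw [show (1:ℝ) - 1 = -ε + ε by ring] at h
    rw [h, Real.Gamma_one, Real.Gamma_add_one hb0.ne']
    field_simp
  have hJlo : 1 / (N + ε) ≤ J := by
    rw [← hbeta0]; exact J_ge_of_pos hb1 (by linarith) hε0.le hx0 hx1
  -- gamma estimates
  set P := (N + 1) ^ ε with hP
  have hPp : 0 < P := rpow_pos_of_pos (by linarith) _
  have c1 : G1 * (N + ε) ≤ G3 * P := by
    have h := gamma_step (x := N + 1) (s := ε) (by linarith) hε0.le hε1.le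
    have h2 : Real.Gamma (N + ε + 1) = (N + ε) * G1 := Real.Gamma_add_one hb0.ne'
    rw [show N + 1 + ε = N + ε + 1 by ring, h2] at h
    linarith [h]
  have c2 : (1 - ε) * G2 ≤ 1 := by
    have h := gamma_step (x := 1) (s := 1 - ε) one_pos (by linarith) (by linarith)
    have h2 : Real.Gamma (1 - ε + 1) = (1 - ε) * G2 := Real.Gamma_add_one (by linarith : (1:ℝ) - ε ≠ 0)
    rw [show (1:ℝ) + (1 - ε) = 1 - ε + 1 by ring, h2, Real.Gamma_one, Real.one_rpow, one_mul] at h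
    exact h
  set K := G3 / (G1 * G2) with hK
  have hKp : 0 < K := by positivity
  -- F ≤ 1
  have hFup : K * J ≤ 1 := by
    calc K * J ≤ K * (G1 * G2 / G3) := mul_le_mul_of_nonneg_left hJup hKp.le
      _ = 1 := by
          rw [hK, div_mul_div_comm, mul_comm G3 (G1 * G2), div_self (by positivity)]
  -- F ≥ (1-ε) * P⁻¹
  have hFlo : (1 - ε) * P⁻¹ ≤ K * J := by
    have step : (1 - ε) * P⁻¹ ≤ G3 / (G1 * G2 * (N + ε)) := by
      rw [le_div_iff₀ (by positivity)]
      calc (1 - ε) * P⁻¹ * (G1 * G2 * (N + ε))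
          = ((1 - ε) * G2) * (G1 * (N + ε)) * P⁻¹ := by ring
        _ ≤ 1 * (G3 * P) * P⁻¹ := by
            apply mul_le_mul_of_nonneg_right _ (by positivity)
            apply mul_le_mul c2 c1 (by positivity) zero_le_one
        _ = G3 := by rw [one_mul, mul_assoc, mul_inv_cancel₀ hPp.ne', mul_one]
    have hKeq : K * (1 / (N + ε)) = G3 / (G1 * G2 * (N + ε)) := by
      rw [hK]; field_simp
    rw [← hKeq] at step
    calc (1 - ε) * P⁻¹ ≤ K * (1 / (N + ε)) := step
      _ ≤ K * J := mul_le_mul_of_nonneg_left hJlo hKp.le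
  -- convert to exp bound
  have hz0 : 0 ≤ ε * Real.log (N + 1) := by
    apply mul_nonneg hε0.le (Real.log_nonneg (by linarith))
  have hPinv : P⁻¹ = Real.exp (-(ε * Real.log (N + 1))) := by
    rw [hP, Real.rpow_def_of_pos (by linarith), ← Real.exp_neg]
    ring_nf
  have hy1 : 1 - P⁻¹ ≤ ε * Real.log (N + 1) := by
    rw [hPinv]
    have := Real.add_one_le_exp (-(ε * Real.log (N + 1)))
    linarith
  have hy2 : P⁻¹ ≤ 1 := by
    rw [hPinv]
    calc Real.exp (-(ε * Real.log (N + 1))) ≤ Real.exp 0 := Real.exp_le_exp.2 (by linarith)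
      _ = 1 := Real.exp_zero
  have key : 1 - K * J ≤ ε * Real.log (N + 1) + ε := by
    have : 1 - (1 - ε) * P⁻¹ = (1 - P⁻¹) + ε * P⁻¹ := by ring
    nlinarith [hFlo]
  have hnum : ε * Real.log (N + 1) + ε ≤ 16 * Real.log N / N :=
    numeric_bound hN hε0 hε2 (by nlinarith [sq_nonneg N, mul_le_mul hN hN zero_le_two (by linarith : (0:ℝ) ≤ N)]) (by linarith)
  have hpos : 0 ≤ 16 * Real.log N / N := by
    have := Real.log_nonneg (by linarith : (1:ℝ) ≤ N); positivity
  rw [abs_le]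
  constructor <;> [linarith; linarith]

lemma est3 {N ε x : ℝ} (hN : 2 ≤ N) (hε0 : 0 < ε) (hε1 : ε < 1) (hε2 : ε ≤ 2 / N)
    (ha : aCoef N = -ε) (hb : bCoef N = N + ε) (hx0 : 0 ≤ x) (hx1 : x ≤ 1) :
    |hyper (aCoef N) (bCoef N) (N + 3) x - 1| ≤ 16 * Real.log N / N := by
  have hb0 : (0:ℝ) < N + ε := by linarith
  have hb1 : (1:ℝ) ≤ N + ε := by linarith
  rw [ha, hb, hyper_eq (by linarith) hb0]
  rw [show N + 3 - (N + ε) - 1 = 2 - ε by ring, show N + 3 - (N + ε) = 3 - ε by ring,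
    show -(-ε) = ε by ring]
  set G1 := Real.Gamma (N + ε) with hG1
  set G2 := Real.Gamma (3 - ε) with hG2
  set G3 := Real.Gamma (N + 3) with hG3
  set G4 := Real.Gamma (N + ε + 3) with hG4
  have hG1p : 0 < G1 := Real.Gamma_pos_of_pos hb0
  have hG2p : 0 < G2 := Real.Gamma_pos_of_pos (by linarith)
  have hG3p : 0 < G3 := Real.Gamma_pos_of_pos (by linarith)
  have hG4p : 0 < G4 := Real.Gamma_pos_of_pos (by linarith)
  have hGamma3 : Real.Gamma 3 = 2 := by
    rw [show (3:ℝ) = 2 + 1 by norm_num, Real.Gamma_add_one two_ne_zero, Real.Gamma_two]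
    norm_num
  set J := ∫ t in Ioo (0:ℝ) 1, t ^ (N + ε - 1) * (1 - t) ^ (2 - ε) * (1 - x * t) ^ ε with hJ
  have hbeta1 : ∫ t in Ioo (0:ℝ) 1, t ^ (N + ε - 1) * (1 - t) ^ (2 - ε) = G1 * G2 / G3 := by
    have h := betaIoo (b := N + ε) (d := 3 - ε) hb0 (by linarith)
    rw [show (3:ℝ) - ε - 1 = 2 - ε by ring, show N + ε + (3 - ε) = N + 3 by ring] at h
    exact h
  have hJup : J ≤ G1 * G2 / G3 := by
    rw [← hbeta1]; exact J_le_of_pos hb1 (by linarith) hε0.le hx0 hx1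
  have hbeta0 : ∫ t in Ioo (0:ℝ) 1, t ^ (N + ε - 1) * (1 - t) ^ (2 - ε + ε) = 2 * G1 / G4 := by
    have h := betaIoo (b := N + ε) (d := 3) hb0 (by norm_num)
    rw [show (3:ℝ) - 1 = 2 - ε + ε by ring, hGamma3] at h
    rw [h]; ring
  have hJlo : 2 * G1 / G4 ≤ J := by
    rw [← hbeta0]; exact J_ge_of_pos hb1 (by linarith) hε0.le hx0 hx1
  set P := (N + 3) ^ ε with hP
  have hPp : 0 < P := rpow_pos_of_pos (by linarith) _
  have c1 : G4 ≤ G3 * P := by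
    have h := gamma_step (x := N + 3) (s := ε) (by linarith) hε0.le hε1.le
    rw [show N + 3 + ε = N + ε + 3 by ring] at h
    exact h
  have c2 : G2 ≤ 2 := by
    have h := gamma_step (x := 2) (s := 1 - ε) two_pos (by linarith) (by linarith)
    rw [show (2:ℝ) + (1 - ε) = 3 - ε by ring, Real.Gamma_two, one_mul] at h
    calc G2 ≤ (2:ℝ) ^ (1 - ε) := h
      _ ≤ (2:ℝ) ^ (1:ℝ) := Real.rpow_le_rpow_of_exponent_le one_le_two (by linarith)
      _ = 2 := Real.rpow_one 2
  set K := G3 / (G1 * G2) with hK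
  have hKp : 0 < K := by positivity
  have hFup : K * J ≤ 1 := by
    calc K * J ≤ K * (G1 * G2 / G3) := mul_le_mul_of_nonneg_left hJup hKp.le
      _ = 1 := by
          rw [hK, div_mul_div_comm, mul_comm G3 (G1 * G2), div_self (by positivity)]
  have hFlo : P⁻¹ ≤ K * J := by
    have step : P⁻¹ ≤ G3 * 2 / (G2 * G4) := by
      rw [le_div_iff₀ (by positivity)]
      calc P⁻¹ * (G2 * G4) ≤ P⁻¹ * (2 * (G3 * P)) := by
            apply mul_le_mul_of_nonneg_left _ (by positivity)
            exact mul_le_mul c2 c1 hG4p.le (by norm_num)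
        _ = G3 * 2 * (P⁻¹ * P) := by ring
        _ = G3 * 2 := by rw [inv_mul_cancel₀ hPp.ne', mul_one]
    have hKeq : K * (2 * G1 / G4) = G3 * 2 / (G2 * G4) := by
      rw [hK]; field_simp
    calc P⁻¹ ≤ G3 * 2 / (G2 * G4) := step
      _ = K * (2 * G1 / G4) := hKeq.symm
      _ ≤ K * J := mul_le_mul_of_nonneg_left hJlo hKp.le
  have hz0 : 0 ≤ ε * Real.log (N + 3) := by
    apply mul_nonneg hε0.le (Real.log_nonneg (by linarith))
  have hPinv : P⁻¹ = Real.exp (-(ε * Real.log (N + 3))) := by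
    rw [hP, Real.rpow_def_of_pos (by linarith), ← Real.exp_neg]
    ring_nf
  have hy1 : 1 - P⁻¹ ≤ ε * Real.log (N + 3) := by
    rw [hPinv]
    have := Real.add_one_le_exp (-(ε * Real.log (N + 3)))
    linarith
  have hnum : ε * Real.log (N + 3) + ε ≤ 16 * Real.log N / N :=
    numeric_bound hN hε0 hε2
      (by nlinarith [sq_nonneg N, mul_le_mul hN hN zero_le_two (by linarith : (0:ℝ) ≤ N)])
      (by linarith)
  have hpos : 0 ≤ 16 * Real.log N / N := by
    have := Real.log_nonneg (by linarith : (1:ℝ) ≤ N); positivity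
  rw [abs_le]
  constructor
  · linarith
  · linarith

lemma est2 {N ε x : ℝ} (hN : 2 ≤ N) (hε0 : 0 < ε) (hε1 : ε < 1)
    (ha : aCoef N = -ε) (hb : bCoef N = N + ε) (hx0 : 0 ≤ x) (hx1 : x ≤ 1) :
    1 ≤ hyper (aCoef N + 1) (bCoef N) (N + 2) x ∧
      hyper (aCoef N + 1) (bCoef N) (N + 2) x ≤ 16 * N := by
  have hb0 : (0:ℝ) < N + ε := by linarith
  have hb1 : (1:ℝ) ≤ N + ε := by linarith
  rw [ha, hb, hyper_eq (by linarith) hb0]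
  rw [show N + 2 - (N + ε) - 1 = 1 - ε by ring, show N + 2 - (N + ε) = 2 - ε by ring,
    show -(-ε + 1) = ε - 1 by ring]
  set G1 := Real.Gamma (N + ε) with hG1
  set G2 := Real.Gamma (2 - ε) with hG2
  set G3 := Real.Gamma (N + 2) with hG3
  have hG1p : 0 < G1 := Real.Gamma_pos_of_pos hb0
  have hG2p : 0 < G2 := Real.Gamma_pos_of_pos (by linarith)
  have hG3p : 0 < G3 := Real.Gamma_pos_of_pos (by linarith)
  set J := ∫ t in Ioo (0:ℝ) 1, t ^ (N + ε - 1) * (1 - t) ^ (1 - ε) * (1 - x * t) ^ (ε - 1) with hJ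
  have hbeta1 : ∫ t in Ioo (0:ℝ) 1, t ^ (N + ε - 1) * (1 - t) ^ (1 - ε) = G1 * G2 / G3 := by
    have h := betaIoo (b := N + ε) (d := 2 - ε) hb0 (by linarith)
    rw [show (2:ℝ) - ε - 1 = 1 - ε by ring, show N + ε + (2 - ε) = N + 2 by ring] at h
    exact h
  have hJlo : G1 * G2 / G3 ≤ J := by
    rw [← hbeta1]
    exact J_ge_of_neg hb1 (by linarith : (-1:ℝ) < 1 - ε + (ε - 1)) (by linarith) hx0 hx1
  have hbeta0 : ∫ t in Ioo (0:ℝ) 1, t ^ (N + ε - 1) * (1 - t) ^ (1 - ε + (ε - 1)) = 1 / (N + ε) := by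
    have h := betaIoo (b := N + ε) (d := 1) hb0 one_pos
    rw [show (1:ℝ) - 1 = 1 - ε + (ε - 1) by ring] at h
    rw [h, Real.Gamma_one, Real.Gamma_add_one hb0.ne']
    field_simp
  have hJup : J ≤ 1 / (N + ε) := by
    rw [← hbeta0]
    exact J_le_of_neg hb1 (by linarith : (-1:ℝ) < 1 - ε + (ε - 1)) (by linarith) hx0 hx1
  have hbetaL : ∫ t in Ioo (0:ℝ) 1, t ^ (N + ε - 1) * (1 - t) ^ (1:ℝ)
      = 1 / ((N + ε + 1) * (N + ε)) := by
    have h := betaIoo (b := N + ε) (d := 2) hb0 two_pos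
    rw [show (2:ℝ) - 1 = (1:ℝ) by norm_num] at h
    rw [h, Real.Gamma_two,
      show N + ε + 2 = N + ε + 1 + 1 by ring, Real.Gamma_add_one (by linarith : N + ε + 1 ≠ 0),
      Real.Gamma_add_one hb0.ne']
    rw [mul_one]
    field_simp
  have hBlow : 1 / ((N + ε + 1) * (N + ε)) ≤ G1 * G2 / G3 := by
    rw [← hbetaL, ← hbeta1]
    exact g_mono hb1 hε0.le hε1
  set K := G3 / (G1 * G2) with hK
  have hKp : 0 < K := by positivity
  have hKB : K * (G1 * G2 / G3) = 1 := by
    rw [hK, div_mul_div_comm, mul_comm G3 (G1 * G2), div_self (by positivity)]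
  constructor
  · calc (1:ℝ) = K * (G1 * G2 / G3) := hKB.symm
      _ ≤ K * J := mul_le_mul_of_nonneg_left hJlo hKp.le
  · have hKle : K ≤ (N + ε + 1) * (N + ε) := by
      rw [hK, div_le_iff₀ (by positivity)]
      rw [div_le_div_iff₀ (by positivity) hG3p] at hBlow
      nlinarith [hBlow]
    calc K * J ≤ K * (1 / (N + ε)) := mul_le_mul_of_nonneg_left hJup hKp.le
      _ ≤ ((N + ε + 1) * (N + ε)) * (1 / (N + ε)) := by
          apply mul_le_mul_of_nonneg_right hKle (by positivity)
      _ = N + ε + 1 := by field_simp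
      _ ≤ 16 * N := by nlinarith

/-- uniform estimates on `[0,1]` for the hypergeometric functions
`F(a_n,b_n;n+1;·)`, `F(a_n+1,b_n;n+2;·)` and `F(a_n,b_n;n+3;·)`. -/
theorem hyper_uniform_estimates :
    ∃ C : ℝ, 0 < C ∧ ∀ n : ℕ, 2 ≤ n → ∀ x ∈ Icc (0:ℝ) 1,
      |hyper (aCoef n) (bCoef n) ((n : ℝ) + 1) x - 1| ≤ C * Real.log n / n ∧
      1 ≤ hyper (aCoef n + 1) (bCoef n) ((n : ℝ) + 2) x ∧
      hyper (aCoef n + 1) (bCoef n) ((n : ℝ) + 2) x ≤ C * n ∧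
      |hyper (aCoef n) (bCoef n) ((n : ℝ) + 3) x - 1| ≤ C * Real.log n / n := by
  refine ⟨16, by norm_num, fun n hn x hx => ?_⟩
  have hN : (2:ℝ) ≤ (n:ℝ) := by exact_mod_cast hn
  set N := (n:ℝ) with hNdef
  set s := Real.sqrt (N ^ 2 + 8) with hs
  have hsq : s ^ 2 = N ^ 2 + 8 := Real.sq_sqrt (by positivity)
  have hsnn : (0:ℝ) ≤ s := Real.sqrt_nonneg _
  have hlt : N < s := by nlinarith
  have hup : s < N + 2 := by nlinarith
  have hup2 : s ≤ N + 4 / N := by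
    have hN0 : (0:ℝ) < N := by linarith
    have hdiff : (N + 4 / N) ^ 2 - (N ^ 2 + 8) = 16 / N ^ 2 := by field_simp; ring
    have h16 : (0:ℝ) ≤ 16 / N ^ 2 := by positivity
    calc s ≤ Real.sqrt ((N + 4 / N) ^ 2) := by
          rw [hs]; exact Real.sqrt_le_sqrt (by linarith)
      _ = N + 4 / N := Real.sqrt_sq (by positivity)
  set ε := (s - N) / 2 with hε
  have hε0 : 0 < ε := by rw [hε]; linarith
  have hε1 : ε < 1 := by rw [hε]; linarith
  have hε2 : ε ≤ 2 / N := by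
    have h4 : 4 / N = 2 * (2 / N) := by ring
    rw [hε]; linarith [hup2, h4.le, h4.ge]
  have ha : aCoef N = -ε := by rw [aCoef, hε, hs]; ring
  have hb : bCoef N = N + ε := by rw [bCoef, hε, hs]; ring
  obtain ⟨hx0, hx1⟩ := hx
  exact ⟨est1 hN hε0 hε1 hε2 ha hb hx0 hx1,
    (est2 hN hε0 hε1 ha hb hx0 hx1).1,
    (est2 hN hε0 hε1 ha hb hx0 hx1).2,
    est3 hN hε0 hε1 hε2 ha hb hx0 hx1⟩
end

section
/- Let n≥1 be an integer. For every fixed x∈(0,1), the map c∈(b_n,∞)↦F(a_n,b_n;c;x) is strictly increasing, and for every fixed x∈(−∞,0) it is strictly decreasing. -/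
open MeasureTheory Real Set

section Aux

open scoped ENNReal

/-- Integrability of the Beta-type weight times a continuous factor. -/
lemma wInt {u v : ℝ} (hu : 0 < u) (hv : 0 < v) {ρ : ℝ → ℝ}
    (hρ : ContinuousOn ρ (Icc 0 1)) :
    IntegrableOn (fun t => t ^ (u - 1) * (1 - t) ^ (v - 1) * ρ t) (Ioo (0:ℝ) 1) := by
  have hcont1 : ContinuousOn (fun t : ℝ => (1 - t) ^ (v - 1)) (Icc (0:ℝ) (1/2)) := by
    refine ContinuousOn.rpow_const (by fun_prop) ?_
    intro t ht
    simp only [mem_Icc] at ht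
    left; intro h; have := sub_eq_zero.mp h; linarith [ht.2]
  have hcont2 : ContinuousOn (fun t : ℝ => t ^ (u - 1)) (Icc (1/2:ℝ) 1) := by
    refine ContinuousOn.rpow_const (by fun_prop) ?_
    intro t ht
    simp only [mem_Icc] at ht
    left; intro h; rw [h] at ht; norm_num at ht
  have hleft : IntegrableOn (fun t : ℝ => t ^ (u - 1) * (1 - t) ^ (v - 1) * ρ t)
      (Icc (0:ℝ) (1/2)) := by
    have h1 : IntegrableOn (fun t : ℝ => t ^ (u - 1)) (Icc (0:ℝ) (1/2)) := by
      have := intervalIntegral.intervalIntegrable_rpow' (a := (0:ℝ)) (b := 1/2)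
        (r := u - 1) (by linarith)
      exact (intervalIntegrable_iff_integrableOn_Icc_of_le (by norm_num)).mp this
    have hc : ContinuousOn (fun t : ℝ => (1 - t) ^ (v - 1) * ρ t) (Icc (0:ℝ) (1/2)) :=
      hcont1.mul (hρ.mono (Icc_subset_Icc le_rfl (by norm_num)))
    have := h1.mul_continuousOn hc isCompact_Icc
    exact this.congr_fun (fun t _ => by ring) measurableSet_Icc
  have hright : IntegrableOn (fun t : ℝ => t ^ (u - 1) * (1 - t) ^ (v - 1) * ρ t)
      (Icc (1/2:ℝ) 1) := by
    have h1 : IntegrableOn (fun t : ℝ => (1 - t) ^ (v - 1)) (Icc (1/2:ℝ) 1) := by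
      have h0 := intervalIntegral.intervalIntegrable_rpow' (a := (0:ℝ)) (b := 1/2)
        (r := v - 1) (by linarith)
      have h2 := (h0.comp_sub_left 1).symm
      norm_num at h2
      exact (intervalIntegrable_iff_integrableOn_Icc_of_le (by norm_num)).mp h2
    have hc : ContinuousOn (fun t : ℝ => t ^ (u - 1) * ρ t) (Icc (1/2:ℝ) 1) :=
      hcont2.mul (hρ.mono (Icc_subset_Icc (by norm_num) le_rfl))
    have := h1.mul_continuousOn hc isCompact_Icc
    exact this.congr_fun (fun t _ => by ring) measurableSet_Icc
  refine (hleft.union hright).mono_set ?_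
  intro t ht
  rcases le_total t (1/2) with h | h
  · exact Or.inl ⟨ht.1.le, h⟩
  · exact Or.inr ⟨h, ht.2.le⟩

/-- Euler's Beta integral, real version. -/
lemma realBeta {u v : ℝ} (hu : 0 < u) (hv : 0 < v) :
    Real.Gamma u * Real.Gamma v
      = Real.Gamma (u + v) * ∫ t in Ioo (0:ℝ) 1, t ^ (u - 1) * (1 - t) ^ (v - 1) := by
  have key := Complex.Gamma_mul_Gamma_eq_betaIntegral (s := (u:ℂ)) (t := (v:ℂ))
    (by simpa using hu) (by simpa using hv)
  have hbeta : Complex.betaIntegral u v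
      = ((∫ t in Ioo (0:ℝ) 1, t ^ (u - 1) * (1 - t) ^ (v - 1) : ℝ) : ℂ) := by
    rw [Complex.betaIntegral]
    have : ∀ x ∈ uIcc (0:ℝ) 1,
        (x : ℂ) ^ ((u:ℂ) - 1) * (1 - (x:ℂ)) ^ ((v:ℂ) - 1)
          = ((x ^ (u - 1) * (1 - x) ^ (v - 1) : ℝ) : ℂ) := by
      intro x hx
      rw [uIcc_of_le (by norm_num), mem_Icc] at hx
      rw [Complex.ofReal_mul, Complex.ofReal_cpow hx.1, Complex.ofReal_cpow (by linarith)]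
      push_cast
      ring
    rw [intervalIntegral.integral_congr this, intervalIntegral.integral_ofReal,
      intervalIntegral.integral_of_le (by norm_num : (0:ℝ) ≤ 1),
      MeasureTheory.integral_Ioc_eq_integral_Ioo]
  rw [hbeta, ← Complex.ofReal_add, Complex.Gamma_ofReal, Complex.Gamma_ofReal,
    Complex.Gamma_ofReal, ← Complex.ofReal_mul, ← Complex.ofReal_mul] at key
  exact_mod_cast key

/-- Strict Chebyshev-type integral inequality on `(0,1)` for two strictly decreasing
factors against a positive weight. -/
lemma cheb {p φ g : ℝ → ℝ}
    (hp : ∀ t ∈ Ioo (0:ℝ) 1, 0 < p t)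
    (hφ : ∀ t ∈ Ioo (0:ℝ) 1, ∀ s ∈ Ioo (0:ℝ) 1, t < s → φ s < φ t)
    (hg : ∀ t ∈ Ioo (0:ℝ) 1, ∀ s ∈ Ioo (0:ℝ) 1, t < s → g s < g t)
    (h1 : IntegrableOn p (Ioo 0 1))
    (h2 : IntegrableOn (fun t => p t * φ t) (Ioo 0 1))
    (h3 : IntegrableOn (fun t => p t * g t) (Ioo 0 1))
    (h4 : IntegrableOn (fun t => p t * φ t * g t) (Ioo 0 1)) :
    (∫ t in Ioo (0:ℝ) 1, p t * g t) * ∫ t in Ioo (0:ℝ) 1, p t * φ t <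
      (∫ t in Ioo (0:ℝ) 1, p t * φ t * g t) * ∫ t in Ioo (0:ℝ) 1, p t := by
  have hA : Integrable (fun z : ℝ × ℝ => (p z.1 * φ z.1 * g z.1) * p z.2)
      ((volume.restrict (Ioo (0:ℝ) 1)).prod (volume.restrict (Ioo (0:ℝ) 1))) :=
    Integrable.mul_prod h4 h1
  have hB : Integrable (fun z : ℝ × ℝ => (p z.1 * φ z.1) * (p z.2 * g z.2))
      ((volume.restrict (Ioo (0:ℝ) 1)).prod (volume.restrict (Ioo (0:ℝ) 1))) :=
    Integrable.mul_prod h2 h3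
  have hC : Integrable (fun z : ℝ × ℝ => (p z.1 * g z.1) * (p z.2 * φ z.2))
      ((volume.restrict (Ioo (0:ℝ) 1)).prod (volume.restrict (Ioo (0:ℝ) 1))) :=
    Integrable.mul_prod h3 h2
  have hD : Integrable (fun z : ℝ × ℝ => p z.1 * (p z.2 * φ z.2 * g z.2))
      ((volume.restrict (Ioo (0:ℝ) 1)).prod (volume.restrict (Ioo (0:ℝ) 1))) :=
    Integrable.mul_prod h1 h4
  have hAB : Integrable (fun z : ℝ × ℝ =>
      (p z.1 * φ z.1 * g z.1) * p z.2 - (p z.1 * φ z.1) * (p z.2 * g z.2))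
      ((volume.restrict (Ioo (0:ℝ) 1)).prod (volume.restrict (Ioo (0:ℝ) 1))) := hA.sub hB
  have hABC : Integrable (fun z : ℝ × ℝ =>
      (p z.1 * φ z.1 * g z.1) * p z.2 - (p z.1 * φ z.1) * (p z.2 * g z.2)
        - (p z.1 * g z.1) * (p z.2 * φ z.2))
      ((volume.restrict (Ioo (0:ℝ) 1)).prod (volume.restrict (Ioo (0:ℝ) 1))) := hAB.sub hC
  have hH : Integrable (fun z : ℝ × ℝ =>
      (p z.1 * φ z.1 * g z.1) * p z.2 - (p z.1 * φ z.1) * (p z.2 * g z.2)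
        - (p z.1 * g z.1) * (p z.2 * φ z.2) + p z.1 * (p z.2 * φ z.2 * g z.2))
      ((volume.restrict (Ioo (0:ℝ) 1)).prod (volume.restrict (Ioo (0:ℝ) 1))) := hABC.add hD
  have hsplit : ∫ z : ℝ × ℝ,
      ((p z.1 * φ z.1 * g z.1) * p z.2 - (p z.1 * φ z.1) * (p z.2 * g z.2)
        - (p z.1 * g z.1) * (p z.2 * φ z.2) + p z.1 * (p z.2 * φ z.2 * g z.2))
      ∂((volume.restrict (Ioo (0:ℝ) 1)).prod (volume.restrict (Ioo (0:ℝ) 1)))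
      = (∫ t in Ioo (0:ℝ) 1, p t * φ t * g t) * (∫ t in Ioo (0:ℝ) 1, p t)
        - (∫ t in Ioo (0:ℝ) 1, p t * φ t) * (∫ t in Ioo (0:ℝ) 1, p t * g t)
        - (∫ t in Ioo (0:ℝ) 1, p t * g t) * (∫ t in Ioo (0:ℝ) 1, p t * φ t)
        + (∫ t in Ioo (0:ℝ) 1, p t) * (∫ t in Ioo (0:ℝ) 1, p t * φ t * g t) := by
    rw [integral_add hABC hD, integral_sub hAB hC, integral_sub hA hB,
      integral_prod_mul (fun t => p t * φ t * g t) p,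
      integral_prod_mul (fun t => p t * φ t) (fun t => p t * g t),
      integral_prod_mul (fun t => p t * g t) (fun t => p t * φ t),
      integral_prod_mul p (fun t => p t * φ t * g t)]
  have hnn : 0 ≤ᵐ[(volume.restrict (Ioo (0:ℝ) 1)).prod (volume.restrict (Ioo (0:ℝ) 1))]
      (fun z : ℝ × ℝ =>
        (p z.1 * φ z.1 * g z.1) * p z.2 - (p z.1 * φ z.1) * (p z.2 * g z.2)
          - (p z.1 * g z.1) * (p z.2 * φ z.2) + p z.1 * (p z.2 * φ z.2 * g z.2)) := by
    rw [Measure.prod_restrict]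
    filter_upwards [ae_restrict_mem (measurableSet_Ioo.prod measurableSet_Ioo)] with z hz
    obtain ⟨hz1, hz2⟩ := hz
    have hpp : 0 < p z.1 * p z.2 := mul_pos (hp _ hz1) (hp _ hz2)
    have key : 0 ≤ (φ z.1 - φ z.2) * (g z.1 - g z.2) := by
      rcases lt_trichotomy z.1 z.2 with h | h | h
      · have h1' := hφ _ hz1 _ hz2 h
        have h2' := hg _ hz1 _ hz2 h
        have : 0 < (φ z.1 - φ z.2) * (g z.1 - g z.2) := by apply mul_pos <;> linarith
        linarith
      · rw [h]; simp
      · have h1' := hφ _ hz2 _ hz1 h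
        have h2' := hg _ hz2 _ hz1 h
        nlinarith
    simp only [Pi.zero_apply]
    nlinarith [mul_nonneg hpp.le key]
  have hpos : 0 < ∫ z : ℝ × ℝ,
      ((p z.1 * φ z.1 * g z.1) * p z.2 - (p z.1 * φ z.1) * (p z.2 * g z.2)
        - (p z.1 * g z.1) * (p z.2 * φ z.2) + p z.1 * (p z.2 * φ z.2 * g z.2))
      ∂((volume.restrict (Ioo (0:ℝ) 1)).prod (volume.restrict (Ioo (0:ℝ) 1))) := by
    rw [integral_pos_iff_support_of_nonneg_ae hnn hH]
    have hsub : Ioo (0:ℝ) (1/2) ×ˢ Ioo (1/2:ℝ) 1 ⊆ Function.support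
        (fun z : ℝ × ℝ =>
          (p z.1 * φ z.1 * g z.1) * p z.2 - (p z.1 * φ z.1) * (p z.2 * g z.2)
            - (p z.1 * g z.1) * (p z.2 * φ z.2) + p z.1 * (p z.2 * φ z.2 * g z.2)) := by
      rintro ⟨t, s⟩ ⟨ht, hs⟩
      have ht' : t ∈ Ioo (0:ℝ) 1 := ⟨ht.1, lt_trans ht.2 (by norm_num)⟩
      have hs' : s ∈ Ioo (0:ℝ) 1 := ⟨lt_trans (by norm_num) hs.1, hs.2⟩
      have hts : t < s := lt_trans ht.2 hs.1
      have h1' := hφ _ ht' _ hs' hts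
      have h2' := hg _ ht' _ hs' hts
      have hpp := mul_pos (hp _ ht') (hp _ hs')
      have hq : 0 < (φ t - φ s) * (g t - g s) := mul_pos (by linarith) (by linarith)
      have : 0 < (p t * φ t * g t) * p s - (p t * φ t) * (p s * g s)
          - (p t * g t) * (p s * φ s) + p t * (p s * φ s * g s) := by
        nlinarith [mul_pos hpp hq]
      exact ne_of_gt this
    calc (0:ℝ≥0∞)
        < ((volume.restrict (Ioo (0:ℝ) 1)).prod (volume.restrict (Ioo (0:ℝ) 1)))
            (Ioo (0:ℝ) (1/2) ×ˢ Ioo (1/2:ℝ) 1) := by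
          rw [Measure.prod_prod, Measure.restrict_apply measurableSet_Ioo,
            Measure.restrict_apply measurableSet_Ioo,
            inter_eq_self_of_subset_left (Ioo_subset_Ioo le_rfl (by norm_num)),
            inter_eq_self_of_subset_left (Ioo_subset_Ioo (by norm_num) le_rfl),
            Real.volume_Ioo, Real.volume_Ioo]
          norm_num
      _ ≤ _ := measure_mono hsub
  rw [hsplit] at hpos
  have e1 : (∫ t in Ioo (0:ℝ) 1, p t) * (∫ t in Ioo (0:ℝ) 1, p t * φ t * g t)
      = (∫ t in Ioo (0:ℝ) 1, p t * φ t * g t) * (∫ t in Ioo (0:ℝ) 1, p t) := mul_comm _ _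
  have e2 : (∫ t in Ioo (0:ℝ) 1, p t * φ t) * (∫ t in Ioo (0:ℝ) 1, p t * g t)
      = (∫ t in Ioo (0:ℝ) 1, p t * g t) * (∫ t in Ioo (0:ℝ) 1, p t * φ t) := mul_comm _ _
  linarith

/-- Variant of `cheb` for a strictly increasing factor `g`. -/
lemma cheb' {p φ g : ℝ → ℝ}
    (hp : ∀ t ∈ Ioo (0:ℝ) 1, 0 < p t)
    (hφ : ∀ t ∈ Ioo (0:ℝ) 1, ∀ s ∈ Ioo (0:ℝ) 1, t < s → φ s < φ t)
    (hg : ∀ t ∈ Ioo (0:ℝ) 1, ∀ s ∈ Ioo (0:ℝ) 1, t < s → g t < g s)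
    (h1 : IntegrableOn p (Ioo 0 1))
    (h2 : IntegrableOn (fun t => p t * φ t) (Ioo 0 1))
    (h3 : IntegrableOn (fun t => p t * g t) (Ioo 0 1))
    (h4 : IntegrableOn (fun t => p t * φ t * g t) (Ioo 0 1)) :
    (∫ t in Ioo (0:ℝ) 1, p t * φ t * g t) * ∫ t in Ioo (0:ℝ) 1, p t <
      (∫ t in Ioo (0:ℝ) 1, p t * g t) * ∫ t in Ioo (0:ℝ) 1, p t * φ t := by
  have h3n : IntegrableOn (-fun t => p t * g t) (Ioo (0:ℝ) 1) := h3.neg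
  have h4n : IntegrableOn (-fun t => p t * φ t * g t) (Ioo (0:ℝ) 1) := h4.neg
  have h3' : IntegrableOn (fun t => p t * (-g t)) (Ioo (0:ℝ) 1) :=
    h3n.congr_fun (fun t _ => by simp only [Pi.neg_apply]; ring) measurableSet_Ioo
  have h4' : IntegrableOn (fun t => p t * φ t * (-g t)) (Ioo (0:ℝ) 1) :=
    h4n.congr_fun (fun t _ => by simp only [Pi.neg_apply]; ring) measurableSet_Ioo
  have key := cheb hp hφ (fun t ht s hs hts => by have := hg t ht s hs hts; linarith)
    h1 h2 h3' h4'
  have e3 : ∫ t in Ioo (0:ℝ) 1, p t * (-g t) = -∫ t in Ioo (0:ℝ) 1, p t * g t := by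
    rw [← integral_neg]
    exact setIntegral_congr_fun measurableSet_Ioo (fun t _ => by ring)
  have e4 : ∫ t in Ioo (0:ℝ) 1, p t * φ t * (-g t)
      = -∫ t in Ioo (0:ℝ) 1, p t * φ t * g t := by
    rw [← integral_neg]
    exact setIntegral_congr_fun measurableSet_Ioo (fun t _ => by ring)
  rw [e3, e4] at key
  nlinarith [key]

/-- Positivity of the Beta integral. -/
lemma denPos {b c : ℝ} (hb : 0 < b) (hbc : b < c) :
    0 < ∫ t in Ioo (0:ℝ) 1, t ^ (b - 1) * (1 - t) ^ (c - b - 1) := by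
  have h := realBeta hb (sub_pos.mpr hbc)
  rw [show b + (c - b) = c by ring] at h
  have hc := Real.Gamma_pos_of_pos (lt_trans hb hbc)
  have hb' := Real.Gamma_pos_of_pos hb
  have hcb := Real.Gamma_pos_of_pos (sub_pos.mpr hbc)
  nlinarith [h, hc, hb', hcb]

/-- The Euler integral representation rewritten as a ratio of integrals over `Ioo 0 1`. -/
lemma hyperRatio (a b c x : ℝ) (hb : 0 < b) (hbc : b < c) :
    hyper a b c x
      = (∫ t in Ioo (0:ℝ) 1, t ^ (b - 1) * (1 - t) ^ (c - b - 1) * (1 - x * t) ^ (-a))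
        / (∫ t in Ioo (0:ℝ) 1, t ^ (b - 1) * (1 - t) ^ (c - b - 1)) := by
  have h := realBeta hb (sub_pos.mpr hbc)
  rw [show b + (c - b) = c by ring] at h
  have hc := Real.Gamma_pos_of_pos (lt_trans hb hbc)
  have hden := denPos hb hbc
  rw [hyper, if_pos ⟨hbc, hb⟩,
    intervalIntegral.integral_of_le (by norm_num : (0:ℝ) ≤ 1),
    MeasureTheory.integral_Ioc_eq_integral_Ioo, h]
  field_simp
  ring_nf
  simp only [mul_comm x]

/-- Continuity of `t ↦ (1 - x t) ^ e` on `[0,1]` for `x < 1`. -/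
lemma gCont {x : ℝ} (hx : x < 1) (e : ℝ) :
    ContinuousOn (fun t : ℝ => (1 - x * t) ^ e) (Icc (0:ℝ) 1) := by
  refine ContinuousOn.rpow_const (by fun_prop) ?_
  intro t ht
  simp only [mem_Icc] at ht
  left
  have hlt : x * t < 1 := by
    rcases le_or_gt x 0 with h | h
    · nlinarith [mul_nonneg (neg_nonneg.mpr h) ht.1]
    · nlinarith [mul_le_mul_of_nonneg_left ht.2 h.le]
  intro hzero; rw [sub_eq_zero] at hzero; exact absurd hzero.symm (ne_of_lt hlt)

/-- Key comparison: for a strictly decreasing positive factor `g`, the normalized Euler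
integral increases in `c`. -/
lemma keyDec (a b x : ℝ) (hb : 0 < b) (hx : x < 1)
    (hgdec : ∀ t ∈ Ioo (0:ℝ) 1, ∀ s ∈ Ioo (0:ℝ) 1, t < s →
      (1 - x * s) ^ (-a) < (1 - x * t) ^ (-a))
    {c₁ c₂ : ℝ} (hc₁ : b < c₁) (hc₂ : c₁ < c₂) :
    hyper a b c₁ x < hyper a b c₂ x := by
  have hbc₂ : b < c₂ := lt_trans hc₁ hc₂
  -- weight, extra factor, decreasing factor
  set p : ℝ → ℝ := fun t => t ^ (b - 1) * (1 - t) ^ (c₁ - b - 1) with hpdef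
  set φ : ℝ → ℝ := fun t => (1 - t) ^ (c₂ - c₁) with hφdef
  set g : ℝ → ℝ := fun t => (1 - x * t) ^ (-a) with hgdef
  have hpw : ∀ t ∈ Ioo (0:ℝ) 1, 0 < p t := by
    intro t ht
    exact mul_pos (Real.rpow_pos_of_pos ht.1 _)
      (Real.rpow_pos_of_pos (by linarith [ht.2]) _)
  have hφw : ∀ t ∈ Ioo (0:ℝ) 1, ∀ s ∈ Ioo (0:ℝ) 1, t < s → φ s < φ t := by
    intro t ht s hs hts
    exact Real.rpow_lt_rpow (by linarith [hs.2]) (by linarith) (by linarith)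
  -- pointwise identification of the c₂-weight
  have hsplitw : ∀ t ∈ Ioo (0:ℝ) 1,
      t ^ (b - 1) * (1 - t) ^ (c₂ - b - 1) = p t * φ t := by
    intro t ht
    simp only [hpdef, hφdef]
    rw [show c₂ - b - 1 = (c₁ - b - 1) + (c₂ - c₁) by ring,
      Real.rpow_add (by linarith [ht.2] : (0:ℝ) < 1 - t)]
    ring
  -- integrability
  have h1 : IntegrableOn p (Ioo (0:ℝ) 1) :=
    (wInt hb (sub_pos.mpr hc₁) (continuousOn_const (c := (1:ℝ)))).congr_fun
      (fun t _ => by simp only [hpdef]; ring) measurableSet_Ioo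
  have h2 : IntegrableOn (fun t => p t * φ t) (Ioo (0:ℝ) 1) :=
    (wInt hb (sub_pos.mpr hbc₂) (continuousOn_const (c := (1:ℝ)))).congr_fun
      (fun t ht => by beta_reduce; rw [mul_one, hsplitw t ht]) measurableSet_Ioo
  have h3 : IntegrableOn (fun t => p t * g t) (Ioo (0:ℝ) 1) :=
    (wInt hb (sub_pos.mpr hc₁) (gCont hx (-a))).congr_fun
      (fun t _ => rfl) measurableSet_Ioo
  have h4 : IntegrableOn (fun t => p t * φ t * g t) (Ioo (0:ℝ) 1) :=
    (wInt hb (sub_pos.mpr hbc₂) (gCont hx (-a))).congr_fun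
      (fun t ht => by beta_reduce; rw [hsplitw t ht]) measurableSet_Ioo
  have key := cheb hpw hφw hgdec h1 h2 h3 h4
  -- rewrite the target as a ratio and compare
  rw [hyperRatio a b c₁ x hb hc₁, hyperRatio a b c₂ x hb hbc₂,
    div_lt_div_iff₀ (denPos hb hc₁) (denPos hb hbc₂)]
  have e2 : ∫ t in Ioo (0:ℝ) 1, t ^ (b - 1) * (1 - t) ^ (c₂ - b - 1)
      = ∫ t in Ioo (0:ℝ) 1, p t * φ t :=
    setIntegral_congr_fun measurableSet_Ioo (fun t ht => hsplitw t ht)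
  have e4 : ∫ t in Ioo (0:ℝ) 1, t ^ (b - 1) * (1 - t) ^ (c₂ - b - 1) * (1 - x * t) ^ (-a)
      = ∫ t in Ioo (0:ℝ) 1, p t * φ t * g t :=
    setIntegral_congr_fun measurableSet_Ioo (fun t ht => by rw [hsplitw t ht])
  rw [e2, e4]
  exact key

/-- Key comparison: for a strictly increasing positive factor `g`, the normalized Euler
integral decreases in `c`. -/
lemma keyInc (a b x : ℝ) (hb : 0 < b) (hx : x < 1)
    (hginc : ∀ t ∈ Ioo (0:ℝ) 1, ∀ s ∈ Ioo (0:ℝ) 1, t < s →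
      (1 - x * t) ^ (-a) < (1 - x * s) ^ (-a))
    {c₁ c₂ : ℝ} (hc₁ : b < c₁) (hc₂ : c₁ < c₂) :
    hyper a b c₂ x < hyper a b c₁ x := by
  have hbc₂ : b < c₂ := lt_trans hc₁ hc₂
  set p : ℝ → ℝ := fun t => t ^ (b - 1) * (1 - t) ^ (c₁ - b - 1) with hpdef
  set φ : ℝ → ℝ := fun t => (1 - t) ^ (c₂ - c₁) with hφdef
  set g : ℝ → ℝ := fun t => (1 - x * t) ^ (-a) with hgdef
  have hpw : ∀ t ∈ Ioo (0:ℝ) 1, 0 < p t := by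
    intro t ht
    exact mul_pos (Real.rpow_pos_of_pos ht.1 _)
      (Real.rpow_pos_of_pos (by linarith [ht.2]) _)
  have hφw : ∀ t ∈ Ioo (0:ℝ) 1, ∀ s ∈ Ioo (0:ℝ) 1, t < s → φ s < φ t := by
    intro t ht s hs hts
    exact Real.rpow_lt_rpow (by linarith [hs.2]) (by linarith) (by linarith)
  have hsplitw : ∀ t ∈ Ioo (0:ℝ) 1,
      t ^ (b - 1) * (1 - t) ^ (c₂ - b - 1) = p t * φ t := by
    intro t ht
    simp only [hpdef, hφdef]
    rw [show c₂ - b - 1 = (c₁ - b - 1) + (c₂ - c₁) by ring,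
      Real.rpow_add (by linarith [ht.2] : (0:ℝ) < 1 - t)]
    ring
  have h1 : IntegrableOn p (Ioo (0:ℝ) 1) :=
    (wInt hb (sub_pos.mpr hc₁) (continuousOn_const (c := (1:ℝ)))).congr_fun
      (fun t _ => by simp only [hpdef]; ring) measurableSet_Ioo
  have h2 : IntegrableOn (fun t => p t * φ t) (Ioo (0:ℝ) 1) :=
    (wInt hb (sub_pos.mpr hbc₂) (continuousOn_const (c := (1:ℝ)))).congr_fun
      (fun t ht => by beta_reduce; rw [mul_one, hsplitw t ht]) measurableSet_Ioo
  have h3 : IntegrableOn (fun t => p t * g t) (Ioo (0:ℝ) 1) :=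
    (wInt hb (sub_pos.mpr hc₁) (gCont hx (-a))).congr_fun
      (fun t _ => rfl) measurableSet_Ioo
  have h4 : IntegrableOn (fun t => p t * φ t * g t) (Ioo (0:ℝ) 1) :=
    (wInt hb (sub_pos.mpr hbc₂) (gCont hx (-a))).congr_fun
      (fun t ht => by beta_reduce; rw [hsplitw t ht]) measurableSet_Ioo
  have key := cheb' hpw hφw hginc h1 h2 h3 h4
  rw [hyperRatio a b c₁ x hb hc₁, hyperRatio a b c₂ x hb hbc₂,
    div_lt_div_iff₀ (denPos hb hbc₂) (denPos hb hc₁)]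
  have e2 : ∫ t in Ioo (0:ℝ) 1, t ^ (b - 1) * (1 - t) ^ (c₂ - b - 1)
      = ∫ t in Ioo (0:ℝ) 1, p t * φ t :=
    setIntegral_congr_fun measurableSet_Ioo (fun t ht => hsplitw t ht)
  have e4 : ∫ t in Ioo (0:ℝ) 1, t ^ (b - 1) * (1 - t) ^ (c₂ - b - 1) * (1 - x * t) ^ (-a)
      = ∫ t in Ioo (0:ℝ) 1, p t * φ t * g t :=
    setIntegral_congr_fun measurableSet_Ioo (fun t ht => by rw [hsplitw t ht])
  rw [e2, e4]
  exact key

end Aux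

/-- monotonicity of the hypergeometric function `F(a_n,b_n;c;x)` with respect
to the third parameter `c ∈ (b_n,∞)`: strictly increasing for `x ∈ (0,1)` and strictly
decreasing for `x ∈ (-∞,0)`. -/
theorem hyper_monotone_in_c (n : ℕ) (hn : 1 ≤ n) :
    (∀ x ∈ Ioo (0:ℝ) 1,
      StrictMonoOn (fun c : ℝ => hyper (aCoef n) (bCoef n) c x) (Ioi (bCoef n))) ∧
    (∀ x : ℝ, x < 0 →
      StrictAntiOn (fun c : ℝ => hyper (aCoef n) (bCoef n) c x) (Ioi (bCoef n))) := by
  have hn1 : (1:ℝ) ≤ (n:ℝ) := by exact_mod_cast hn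
  have hsqrt : (n:ℝ) < Real.sqrt ((n:ℝ) ^ 2 + 8) := by
    rw [Real.lt_sqrt (by positivity)]
    nlinarith
  have ha : aCoef n < 0 := by
    unfold aCoef
    linarith
  have hb : 0 < bCoef n := by
    unfold bCoef
    nlinarith [Real.sqrt_nonneg ((n:ℝ) ^ 2 + 8)]
  have hanng : 0 < -aCoef n := by linarith
  constructor
  · intro x hx
    intro c₁ hc₁ c₂ hc₂ hlt
    simp only
    apply keyDec (aCoef n) (bCoef n) x hb (by linarith [hx.2])
      (fun t ht s hs hts => ?_) hc₁ hlt
    have hxs : x * s < 1 := by nlinarith [hx.1, hx.2, hs.1, hs.2]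
    have hbase : 1 - x * s < 1 - x * t := by nlinarith [hx.1]
    exact Real.rpow_lt_rpow (by linarith) hbase hanng
  · intro x hxneg
    intro c₁ hc₁ c₂ hc₂ hlt
    simp only
    apply keyInc (aCoef n) (bCoef n) x hb (by linarith)
      (fun t ht s hs hts => ?_) hc₁ hlt
    have hxt : x * t < 0 := mul_neg_of_neg_of_pos hxneg ht.1
    have hbase : 1 - x * t < 1 - x * s := by nlinarith
    exact Real.rpow_lt_rpow (by linarith) hbase hanng
end
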